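/- arXiv:math/9812043 — 6 statements merged into one kernel-verified Lean document; each statement's English description precedes it below -/
import Mathlib

section
/- The Airy transform 𝒜 = 𝓕⁻¹ ∘ M_h ∘ 𝓕⁻¹ is a unitary operator on L²(ℝ, ℂ), and it is an involution: 𝒜 ∘ 𝒜 is the identity (equivalently, 𝒜⁻¹ = 𝒜). -/
open MeasureTheory Complex Filter Set

noncomputable section

/-- The space `L²(ℝ, ℂ)`. -/
abbrev L2Space := Lp ℂ 2 (volume : Measure ℝ)

namespace AiryAux

open scoped FourierTransform SchwartzMap ContDiff

def cR : ℝ := (2 * Real.pi) ^ (-(1:ℝ)/2)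

lemma two_pi_pos : (0:ℝ) < 2 * Real.pi := by positivity

lemma cR_pos : 0 < cR := Real.rpow_pos_of_pos two_pi_pos _

lemma cR_sq : cR * cR * (2 * Real.pi) = 1 := by
  have h : cR * cR = (2 * Real.pi) ^ (-1 : ℝ) := by
    rw [cR, ← Real.rpow_add two_pi_pos]; norm_num
  rw [h, Real.rpow_neg_one]
  exact inv_mul_cancel₀ two_pi_pos.ne'

def myF (g : ℝ → ℂ) (x : ℝ) : ℂ :=
  ((cR : ℝ) : ℂ) * ∫ t : ℝ, g t * Complex.exp (-Complex.I * (x:ℂ) * (t:ℂ))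

lemma myF_eq (g : ℝ → ℂ) (x : ℝ) :
    myF g x = (cR : ℂ) * FourierTransform.fourier g (x / (2 * Real.pi)) := by
  rw [Real.fourier_real_eq_integral_exp_smul, myF]
  congr 1
  have h : ∀ t : ℝ, g t * Complex.exp (-Complex.I * (x:ℂ) * (t:ℂ)) =
      Complex.exp (↑(-2 * Real.pi * t * (x / (2*Real.pi))) * Complex.I) • g t := by
    intro t
    rw [smul_eq_mul, mul_comm]
    congr 1
    have hr : -2 * Real.pi * t * (x / (2*Real.pi)) = -(x*t) := by
      field_simp
    rw [hr]
    push_cast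
    ring
  simp only [h]

lemma myF_myF {f : ℝ → ℂ} (hc : Continuous f) (hi : Integrable f)
    (hFi : Integrable (FourierTransform.fourier f)) (x : ℝ) :
    myF (myF f) x = f (-x) := by
  have h2π : (2 * Real.pi) ≠ 0 := two_pi_pos.ne'
  have hrepr : (fun t : ℝ => myF f t * Complex.exp (-Complex.I * (x:ℂ) * (t:ℂ)))
      = fun t : ℝ => (fun s : ℝ => (cR:ℂ) * (FourierTransform.fourier f s *
          Complex.exp (-Complex.I * (x:ℂ) * ((2 * Real.pi * s : ℝ):ℂ)))) (t / (2 * Real.pi)) := by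
    funext t
    rw [myF_eq, mul_assoc]
    congr 3
    rw [mul_div_cancel₀ _ h2π]
  rw [show myF (myF f) x
      = (cR:ℂ) * ∫ t : ℝ, myF f t * Complex.exp (-Complex.I * (x:ℂ) * (t:ℂ)) from rfl]
  rw [hrepr, MeasureTheory.Measure.integral_comp_div (fun s : ℝ => (cR:ℂ) *
    (FourierTransform.fourier f s * Complex.exp (-Complex.I * (x:ℂ) *
      ((2 * Real.pi * s : ℝ):ℂ)))) (2 * Real.pi)]
  rw [integral_const_mul]
  have hFF : (∫ s : ℝ, FourierTransform.fourier f s *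
      Complex.exp (-Complex.I * (x:ℂ) * ((2 * Real.pi * s : ℝ):ℂ)))
      = FourierTransform.fourier (FourierTransform.fourier f) x := by
    rw [Real.fourier_real_eq_integral_exp_smul]
    congr 1
    funext s
    rw [smul_eq_mul, mul_comm]
    congr 1
    push_cast
    ring
  rw [hFF]
  have habs : |2 * Real.pi| = 2 * Real.pi := abs_of_pos two_pi_pos
  rw [habs]
  have hsmul : (2 * Real.pi) • ((cR:ℂ) * FourierTransform.fourier (FourierTransform.fourier f) x)
      = ((2 * Real.pi : ℝ):ℂ) * ((cR:ℂ) * FourierTransform.fourier (FourierTransform.fourier f) x) := by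
    rw [Complex.real_smul]
  rw [hsmul]
  have hconst : (cR:ℂ) * (((2 * Real.pi : ℝ):ℂ) *
      ((cR:ℂ) * FourierTransform.fourier (FourierTransform.fourier f) x))
      = ((cR * cR * (2 * Real.pi) : ℝ):ℂ) * FourierTransform.fourier (FourierTransform.fourier f) x := by
    push_cast
    ring
  rw [hconst, cR_sq]
  have hinv : FourierTransform.fourier (FourierTransform.fourier f) x = f (-x) := by
    rw [← neg_neg x, ← Real.fourierInv_eq_fourier_neg]
    rw [neg_neg]
    exact hi.fourierInv_fourier_eq hFi hc.continuousAt
  rw [hinv]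
  push_cast
  ring

def toSchwartz (f : ℝ → ℂ) (h1 : ContDiff ℝ ∞ f) (h2 : HasCompactSupport f) : 𝓢(ℝ, ℂ) where
  toFun := f
  smooth' := h1
  decay' := by
    intro k n
    have hc : Continuous fun x : ℝ => ‖x‖ ^ k * ‖iteratedFDeriv ℝ n f x‖ :=
      (continuous_norm.pow k).mul (h1.continuous_iteratedFDeriv (by exact_mod_cast le_top)).norm
    have hsupp : HasCompactSupport fun x : ℝ => ‖x‖ ^ k * ‖iteratedFDeriv ℝ n f x‖ := by
      apply HasCompactSupport.mul_left
      exact (h2.iteratedFDeriv n).norm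
    obtain ⟨C, hC⟩ := hc.bounded_above_of_compact_support hsupp
    refine ⟨C, fun x => ?_⟩
    have := hC x
    calc ‖x‖ ^ k * ‖iteratedFDeriv ℝ n f x‖
        ≤ ‖‖x‖ ^ k * ‖iteratedFDeriv ℝ n f x‖‖ := le_abs_self _
      _ ≤ C := this

lemma toSchwartz_coe (f : ℝ → ℂ) (h1 : ContDiff ℝ ∞ f) (h2 : HasCompactSupport f) :
    ⇑(toSchwartz f h1 h2) = f := rfl

lemma schwartz_bound (f : 𝓢(ℝ, ℂ)) : ∃ C : ℝ, ∀ x, ‖f x‖ ≤ C := by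
  obtain ⟨C, -, hC⟩ := f.decay 0 0
  refine ⟨C, fun x => ?_⟩
  have := hC x
  simpa [norm_iteratedFDeriv_zero] using this

lemma memL2_of_integrable_of_bounded {g : ℝ → ℂ} (hc : Continuous g)
    (hi : Integrable g) {C : ℝ} (hC : ∀ x, ‖g x‖ ≤ C) : MemLp g 2 (volume : Measure ℝ) := by
  rw [memLp_two_iff_integrable_sq_norm hc.aestronglyMeasurable]
  refine (hi.norm.const_mul C).mono' ((hc.norm.pow 2).aestronglyMeasurable) ?_
  filter_upwards with x
  have h0 : (0:ℝ) ≤ ‖g x‖ := norm_nonneg _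
  have h1 := hC x
  have h2 : ‖g x‖ ^ 2 ≤ C * ‖g x‖ := by nlinarith
  simpa [Real.norm_eq_abs, _root_.abs_of_nonneg (pow_nonneg h0 2)] using h2

lemma schwartz_memL2 (f : 𝓢(ℝ, ℂ)) : MemLp (⇑f) 2 (volume : Measure ℝ) := by
  obtain ⟨C, hC⟩ := schwartz_bound f
  exact memL2_of_integrable_of_bounded f.continuous f.integrable hC

lemma fourier_schwartz_coe (f : 𝓢(ℝ, ℂ)) :
    FourierTransform.fourier ⇑f = ⇑(SchwartzMap.fourierTransformCLM ℂ f) := rfl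

lemma myF_schwartz_eq (f : 𝓢(ℝ, ℂ)) :
    myF ⇑f = fun x : ℝ => (cR:ℂ) * (SchwartzMap.fourierTransformCLM ℂ f) (x / (2 * Real.pi)) := by
  funext x
  rw [myF_eq, fourier_schwartz_coe]

lemma myF_schwartz_integrable (f : 𝓢(ℝ, ℂ)) : Integrable (myF ⇑f) (volume : Measure ℝ) := by
  rw [myF_schwartz_eq]
  exact ((SchwartzMap.fourierTransformCLM ℂ f).integrable.comp_div two_pi_pos.ne').const_mul _

lemma myF_schwartz_memL2 (f : 𝓢(ℝ, ℂ)) : MemLp (myF ⇑f) 2 (volume : Measure ℝ) := by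
  rw [myF_schwartz_eq]
  obtain ⟨C, hC⟩ := schwartz_bound (SchwartzMap.fourierTransformCLM ℂ f)
  refine memL2_of_integrable_of_bounded
    (continuous_const.mul ((SchwartzMap.fourierTransformCLM ℂ f).continuous.comp
      (continuous_id.div_const _))) ?_ (C := cR * C) ?_
  · exact ((SchwartzMap.fourierTransformCLM ℂ f).integrable.comp_div two_pi_pos.ne').const_mul _
  · intro x
    rw [norm_mul]
    have h1 : ‖((cR:ℝ):ℂ)‖ = cR := by
      rw [Complex.norm_real, Real.norm_eq_abs, abs_of_pos cR_pos]
    rw [h1]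
    exact mul_le_mul_of_nonneg_left (hC _) cR_pos.le

/-- The set of `L²` elements coming from smooth compactly supported functions. -/
def genSet : Set L2Space :=
  {u | ∃ (f : ℝ → ℂ) (_ : ContDiff ℝ ∞ f) (_ : HasCompactSupport f)
    (hm : MemLp f 2 (volume : Measure ℝ)), u = hm.toLp f}

def W : Submodule ℂ L2Space := Submodule.span ℂ genSet

lemma W_dense : W.topologicalClosure = ⊤ := by
  rw [Submodule.topologicalClosure_eq_top_iff, Submodule.eq_bot_iff]
  intro u hu
  rw [Submodule.mem_orthogonal] at hu
  have key : ∀ g : ℝ → ℝ, ContDiff ℝ ∞ g → HasCompactSupport g →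
      ∫ x : ℝ, g x • (u : ℝ → ℂ) x = 0 := by
    intro g hg1 hg2
    set gc : ℝ → ℂ := Complex.ofReal ∘ g with hgc
    have hgc1 : ContDiff ℝ ∞ gc := Complex.ofRealCLM.contDiff.comp hg1
    have hgc2 : HasCompactSupport gc := hg2.comp_left (by simp)
    have hm : MemLp gc 2 (volume : Measure ℝ) :=
      Continuous.memLp_of_hasCompactSupport hgc1.continuous hgc2
    have hv : (hm.toLp gc) ∈ W := Submodule.subset_span ⟨gc, hgc1, hgc2, hm, rfl⟩
    have h0 : (inner ℂ (hm.toLp gc) u : ℂ) = 0 := hu _ hv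
    rw [MeasureTheory.L2.inner_def] at h0
    have h1 : ∫ x : ℝ, (inner ℂ ((hm.toLp gc : ℝ → ℂ) x) ((u : ℝ → ℂ) x) : ℂ) ∂(volume)
        = ∫ x : ℝ, (inner ℂ (gc x) ((u : ℝ → ℂ) x) : ℂ) ∂(volume) := by
      apply integral_congr_ae
      filter_upwards [hm.coeFn_toLp] with x hx
      rw [hx]
    rw [h1] at h0
    rw [← h0]
    apply integral_congr_ae
    filter_upwards with x
    simp [hgc, RCLike.inner_apply, Complex.real_smul, mul_comm]
  have hu0 : (u : ℝ → ℂ) =ᵐ[volume] 0 :=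
    ae_eq_zero_of_integral_contDiff_smul_eq_zero
      ((Lp.memLp u).locallyIntegrable one_le_two) key
  exact Lp.ext (hu0.trans (Lp.coeFn_zero ℂ 2 (volume : Measure ℝ)).symm)

end AiryAux

open AiryAux
open scoped SchwartzMap ContDiff

/-- The Airy transform `𝒜 = 𝓕⁻¹ ∘ M_h ∘ 𝓕⁻¹`, where `𝓕` is the
Fourier–Plancherel transform on `L²(ℝ, ℂ)` (the unitary operator agreeing with
`g ↦ (2π)^{-1/2} ∫ g(t) e^{-ixt} dt` on integrable functions) and `M_h` is
multiplication by `h(t) = e^{it³/3}`, is a unitary operator on `L²(ℝ, ℂ)` and is an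
involution: `𝒜 ∘ 𝒜 = I` (equivalently `𝒜⁻¹ = 𝒜`). -/
theorem airy_transform_unitary_involution
    (𝓕 : L2Space ≃ₗᵢ[ℂ] L2Space)
    (h𝓕 : ∀ (g : ℝ → ℂ) (_ : Integrable g (volume : Measure ℝ))
      (hg2 : MemLp g 2 (volume : Measure ℝ)),
      (𝓕 (hg2.toLp g) : ℝ → ℂ) =ᵐ[volume]
        fun x : ℝ => (((2 * Real.pi : ℝ) ^ (-(1 : ℝ) / 2) : ℝ) : ℂ) *
          ∫ t : ℝ, g t * Complex.exp (-Complex.I * (x : ℂ) * (t : ℂ)))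
    (Mh : L2Space →ₗ[ℂ] L2Space)
    (hMh : ∀ u : L2Space, (Mh u : ℝ → ℂ) =ᵐ[volume]
      fun t : ℝ => Complex.exp (Complex.I * (t : ℂ) ^ 3 / 3) * u t) :
    -- 𝒜 := 𝓕⁻¹ ∘ M_h ∘ 𝓕⁻¹ is a (linear) isometry ...
    (∀ u : L2Space, ‖𝓕.symm (Mh (𝓕.symm u))‖ = ‖u‖) ∧
    -- ... which is bijective (hence unitary) ...
    Function.Bijective (fun u : L2Space => 𝓕.symm (Mh (𝓕.symm u))) ∧
    -- ... and an involution: 𝒜 (𝒜 u) = u for every u, i.e. 𝒜⁻¹ = 𝒜.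
    (∀ u : L2Space, 𝓕.symm (Mh (𝓕.symm (𝓕.symm (Mh (𝓕.symm u))))) = u) := by
  -- reinterpret the Fourier formula via `myF`
  have h𝓕' : ∀ (g : ℝ → ℂ) (_ : Integrable g (volume : Measure ℝ))
      (hg2 : MemLp g 2 (volume : Measure ℝ)),
      (𝓕 (hg2.toLp g) : ℝ → ℂ) =ᵐ[volume] myF g := fun g hgi hg2 => h𝓕 g hgi hg2
  -- the reflection operator
  have hqmp : Measure.QuasiMeasurePreserving (Neg.neg : ℝ → ℝ) volume volume :=
    (Measure.measurePreserving_neg (volume : Measure ℝ)).quasiMeasurePreserving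
  set R : L2Space →ₗᵢ[ℂ] L2Space :=
    Lp.compMeasurePreservingₗᵢ ℂ (Neg.neg : ℝ → ℝ)
      (Measure.measurePreserving_neg (volume : Measure ℝ)) with hRdef
  have hRcoe : ∀ u : L2Space, (R u : ℝ → ℂ) =ᵐ[volume] (u : ℝ → ℂ) ∘ (Neg.neg : ℝ → ℝ) :=
    fun u => Lp.coeFn_compMeasurePreserving u _
  have hRR : ∀ u : L2Space, R (R u) = u := by
    intro u
    apply Lp.ext
    refine (hRcoe (R u)).trans ?_
    refine (hqmp.ae_eq_comp (hRcoe u)).trans ?_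
    filter_upwards with x
    simp [Function.comp]
  -- generators satisfy 𝓕 𝓕 u = R u
  have hgen : ∀ (f : ℝ → ℂ) (h1 : ContDiff ℝ ∞ f) (h2 : HasCompactSupport f)
      (hm : MemLp f 2 (volume : Measure ℝ)),
      𝓕 (𝓕 (hm.toLp f)) = R (hm.toLp f) := by
    intro f h1 h2 hm
    set fS : 𝓢(ℝ, ℂ) := toSchwartz f h1 h2 with hfS
    have hcf : Continuous f := h1.continuous
    have hint : Integrable f (volume : Measure ℝ) := fS.integrable
    have hstep1 : (𝓕 (hm.toLp f) : ℝ → ℂ) =ᵐ[volume] myF f := h𝓕' f hint hm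
    have hgi : Integrable (myF f) (volume : Measure ℝ) := myF_schwartz_integrable fS
    have hg2 : MemLp (myF f) 2 (volume : Measure ℝ) := myF_schwartz_memL2 fS
    have heq : hg2.toLp (myF f) = 𝓕 (hm.toLp f) :=
      Lp.ext ((hg2.coeFn_toLp).trans hstep1.symm)
    have hstep2 : (𝓕 (𝓕 (hm.toLp f)) : ℝ → ℂ) =ᵐ[volume] myF (myF f) := by
      rw [← heq]
      exact h𝓕' (myF f) hgi hg2
    have hFint : Integrable (FourierTransform.fourier f) (volume : Measure ℝ) :=
      (SchwartzMap.fourierTransformCLM ℂ fS).integrable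
    have hinvf : myF (myF f) = fun x : ℝ => f (-x) :=
      funext fun x => myF_myF hcf hint hFint x
    have hR : (R (hm.toLp f) : ℝ → ℂ) =ᵐ[volume] fun x : ℝ => f (-x) := by
      refine (hRcoe _).trans ?_
      refine (hqmp.ae_eq_comp hm.coeFn_toLp).trans ?_
      filter_upwards with x
      simp [Function.comp]
    apply Lp.ext
    refine hstep2.trans ?_
    rw [hinvf]
    exact hR.symm
  -- density argument: 𝓕 ∘ 𝓕 = R
  have hFF : ∀ u : L2Space, 𝓕 (𝓕 u) = R u := by
    set A : L2Space →L[ℂ] L2Space :=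
      (𝓕.toContinuousLinearEquiv.toContinuousLinearMap).comp
        (𝓕.toContinuousLinearEquiv.toContinuousLinearMap) with hA
    set B : L2Space →L[ℂ] L2Space := R.toContinuousLinearMap with hB
    have hApply : ∀ u, A u = 𝓕 (𝓕 u) := fun u => rfl
    have hBpply : ∀ u, B u = R u := fun u => rfl
    have hker : W ≤ LinearMap.ker (A - B : L2Space →ₗ[ℂ] L2Space) := by
      rw [W, Submodule.span_le]
      rintro u ⟨f, h1, h2, hm, rfl⟩
      rw [SetLike.mem_coe, LinearMap.mem_ker]
      have : A (hm.toLp f) - B (hm.toLp f) = 0 := by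
        rw [hApply, hBpply, hgen f h1 h2 hm, sub_self]
      simpa using this
    have hclosed : IsClosed ((LinearMap.ker (A - B : L2Space →ₗ[ℂ] L2Space) : Submodule ℂ L2Space) : Set L2Space) :=
      ContinuousLinearMap.isClosed_ker (A - B)
    have hle : W.topologicalClosure ≤ LinearMap.ker (A - B : L2Space →ₗ[ℂ] L2Space) :=
      W.topologicalClosure_minimal hker hclosed
    rw [W_dense] at hle
    intro u
    have hu : u ∈ LinearMap.ker (A - B : L2Space →ₗ[ℂ] L2Space) := hle trivial
    rw [LinearMap.mem_ker] at hu
    have : A u - B u = 0 := by simpa using hu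
    have := sub_eq_zero.mp this
    rw [hApply, hBpply] at this
    exact this
  -- 𝓕⁻¹ ∘ 𝓕⁻¹ = R
  have hFinv2 : ∀ u : L2Space, 𝓕.symm (𝓕.symm u) = R u := by
    intro u
    have h := hFF (𝓕.symm (𝓕.symm u))
    rw [LinearIsometryEquiv.apply_symm_apply, LinearIsometryEquiv.apply_symm_apply] at h
    have h2 := congrArg R h
    rw [hRR] at h2
    exact h2.symm
  -- Mh is an isometry
  have hMhnorm : ∀ w : L2Space, ‖Mh w‖ = ‖w‖ := by
    intro w
    rw [Lp.norm_def, Lp.norm_def, eLpNorm_congr_ae (hMh w)]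
    congr 1
    apply eLpNorm_congr_norm_ae
    filter_upwards with t
    rw [norm_mul]
    have h : Complex.I * (t:ℂ)^3 / 3 = ((t^3/3 : ℝ) : ℂ) * Complex.I := by
      push_cast
      ring
    rw [h, Complex.norm_exp_ofReal_mul_I, one_mul]
  -- Mh ∘ R ∘ Mh = R
  have hMRM : ∀ v : L2Space, Mh (R (Mh v)) = R v := by
    intro v
    apply Lp.ext
    have e1 : ((R (Mh v)) : ℝ → ℂ) =ᵐ[volume]
        (fun t : ℝ => Complex.exp (Complex.I * (t:ℂ) ^ 3 / 3) * v t) ∘ (Neg.neg : ℝ → ℝ) :=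
      (hRcoe (Mh v)).trans (hqmp.ae_eq_comp (hMh v))
    have e2 := hMh (R (Mh v))
    refine e2.trans ?_
    have e3 : (fun t : ℝ => Complex.exp (Complex.I * (t:ℂ) ^ 3 / 3) * (R (Mh v) : ℝ → ℂ) t)
        =ᵐ[volume] fun t : ℝ => (v : ℝ → ℂ) (-t) := by
      filter_upwards [e1] with t ht
      rw [ht]
      simp only [Function.comp]
      push_cast
      rw [← mul_assoc, ← Complex.exp_add]
      have : Complex.I * (t:ℂ) ^ 3 / 3 + Complex.I * (-(t:ℂ)) ^ 3 / 3 = 0 := by ring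
      rw [this, Complex.exp_zero, one_mul]
    refine e3.trans ?_
    refine ((hRcoe v).trans ?_).symm
    filter_upwards with x
    simp [Function.comp]
  -- assembly
  have hinv : ∀ u : L2Space, 𝓕.symm (Mh (𝓕.symm (𝓕.symm (Mh (𝓕.symm u))))) = u := by
    intro u
    rw [hFinv2 (Mh (𝓕.symm u)), hMRM (𝓕.symm u), ← hFinv2 (𝓕.symm u),
      hFinv2 (𝓕.symm (𝓕.symm u)), hFinv2 u, hRR]
  refine ⟨?_, ?_, hinv⟩
  · intro u
    rw [LinearIsometryEquiv.norm_map, hMhnorm, LinearIsometryEquiv.norm_map]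
  · exact Function.bijective_iff_has_inverse.mpr
      ⟨fun u => 𝓕.symm (Mh (𝓕.symm u)), hinv, hinv⟩
end
end

section
/- For all real x ≠ y, the Airy kernel satisfies ∫_0^∞ Ai(x+z) Ai(y+z) dz = (Ai(x) Ai'(y) − Ai(y) Ai'(x)) / (x − y). -/
open MeasureTheory Complex Filter Set

open Topology

noncomputable section

noncomputable def ff (u : ℝ) (w : ℂ) : ℂ := Complex.exp (Complex.I * (w^3/3 + w*u))
noncomputable def gg (u t : ℝ) : ℂ := ff u ((t:ℂ) + Complex.I)

theorem hasDerivAt_ff_u (w : ℂ) (u : ℝ) :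
    HasDerivAt (fun v : ℝ => ff v w) (Complex.I * w * ff u w) u := by
  have h : HasDerivAt (fun v : ℝ => Complex.I * (w^3/3 + w*v)) (Complex.I * w) u := by
    simpa using (((hasDerivAt_id u).ofReal_comp.const_mul w).const_add (w^3/3)).const_mul Complex.I
  simpa [ff, mul_comm] using h.cexp

theorem hasDerivAt_gg_t (u t : ℝ) :
    HasDerivAt (fun s : ℝ => gg u s) (Complex.I * ((((t:ℂ) + Complex.I))^2 + u) * gg u t) t := by
  have h1 : HasDerivAt (fun s : ℝ => ((s:ℂ) + Complex.I)) 1 t := by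
    simpa using (hasDerivAt_id t).ofReal_comp.add_const Complex.I
  have hp : HasDerivAt (fun s : ℝ => (((s:ℂ) + Complex.I))^3) (3 * (((t:ℂ) + Complex.I))^2) t := by
    have : HasDerivAt (fun s : ℝ => ((s:ℂ) + Complex.I) * ((s:ℂ) + Complex.I) * ((s:ℂ) + Complex.I)) _ t := (h1.mul h1).mul h1
    convert this using 1
    · funext s; ring
    · simp only [Pi.mul_apply]; ring
  have h : HasDerivAt (fun s : ℝ => Complex.I * ((((s:ℂ) + Complex.I))^3/3 + ((s:ℂ) + Complex.I)*u))
      (Complex.I * ((((t:ℂ) + Complex.I))^2 + u)) t := by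
    have := (((hp.div_const (3:ℂ)).add (h1.mul_const (u:ℂ))).const_mul Complex.I)
    exact this.congr_deriv (by ring)
  simpa [gg, ff, mul_comm] using h.cexp

theorem continuous_gg (u : ℝ) : Continuous (gg u) := by
  unfold gg ff
  fun_prop

theorem norm_ff (u s y : ℝ) : ‖ff u ((s:ℂ) + (y:ℂ)*Complex.I)‖ = Real.exp (y^3/3 - s^2*y - u*y) := by
  have h3 : (Complex.I)^3 = -Complex.I := by simp [pow_succ, Complex.I_mul_I]
  have h4 : (Complex.I)^4 = 1 := by simp [pow_succ, Complex.I_mul_I]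
  have h : Complex.I * (((s:ℂ) + (y:ℂ)*Complex.I)^3/3 + ((s:ℂ) + (y:ℂ)*Complex.I)*u)
      = ((y^3/3 - s^2*y - u*y : ℝ) : ℂ) + ((s^3/3 - s*y^2 + s*u : ℝ) : ℂ) * Complex.I := by
    push_cast
    ring_nf
    rw [Complex.I_sq, h3, h4]
    ring
  rw [ff, h, Complex.norm_exp]
  norm_num [Complex.add_re, ← Complex.ofReal_pow]

theorem norm_gg (u t : ℝ) : ‖gg u t‖ = Real.exp (1/3 - u) * Real.exp (-t^2) := by
  have := norm_ff u t 1
  simp only [Complex.ofReal_one, one_mul] at this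
  rw [gg, this, ← Real.exp_add]
  ring_nf

theorem integrable_master (a : ℝ) :
    Integrable (fun t : ℝ => Real.exp (a*|t|) * Real.exp (-t^2)) := by
  have hb : Integrable (fun t : ℝ => Real.exp (a^2/2) * Real.exp (-(1/2 : ℝ)*t^2)) :=
    (integrable_exp_neg_mul_sq (by norm_num : (0:ℝ) < 1/2)).const_mul _
  refine hb.mono' (Continuous.mul (by continuity) (by continuity)).aestronglyMeasurable (Filter.Eventually.of_forall fun t => ?_)
  rw [Real.norm_eq_abs, _root_.abs_of_nonneg (by positivity), ← Real.exp_add, ← Real.exp_add]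
  apply Real.exp_le_exp.2
  nlinarith [sq_nonneg (|a| - |t|), _root_.sq_abs t, _root_.sq_abs a,
    mul_le_mul_of_nonneg_right (le_abs_self a) (abs_nonneg t)]

theorem abs_add_one_le (t : ℝ) : |t| + 1 ≤ Real.exp (1*|t|) := by
  simpa using Real.add_one_le_exp |t|

theorem norm_t_add_I_le (t : ℝ) : ‖(t:ℂ) + Complex.I‖ ≤ |t| + 1 := by
  refine (norm_add_le _ _).trans ?_
  simp [Complex.norm_real]

theorem integrable_of_le_gauss {h : ℝ → ℂ} (hc : Continuous h) (K : ℝ)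
    (hK : ∀ t, ‖h t‖ ≤ K * (Real.exp (2*|t|) * Real.exp (-t^2))) : Integrable h :=
  ((integrable_master 2).const_mul K).mono' hc.aestronglyMeasurable
    (Filter.Eventually.of_forall hK)

theorem one_le_gauss_fac (t : ℝ) : (1:ℝ) ≤ Real.exp (2*|t|) :=
  Real.one_le_exp (by positivity)

theorem abs_add_one_le' (t : ℝ) : |t| + 1 ≤ Real.exp (2*|t|) :=
  (abs_add_one_le t).trans (Real.exp_le_exp.2 (by nlinarith [abs_nonneg t]))

theorem sq_abs_add_one_le (t : ℝ) : (|t| + 1)^2 ≤ Real.exp (2*|t|) := by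
  have h := abs_add_one_le t
  have h2 : (|t|+1)^2 ≤ (Real.exp (1*|t|))^2 := by
    apply pow_le_pow_left₀ (by positivity) h
  refine h2.trans ?_
  rw [← Real.exp_nat_mul]
  apply Real.exp_le_exp.2
  simp

theorem integrable_gg (u : ℝ) : Integrable (gg u) := by
  refine integrable_of_le_gauss (continuous_gg u) (Real.exp (1/3 - u)) fun t => ?_
  rw [norm_gg]
  have h1 := one_le_gauss_fac t
  calc Real.exp (1/3-u) * Real.exp (-t^2) = Real.exp (1/3-u) * (1 * Real.exp (-t^2)) := by ring
    _ ≤ Real.exp (1/3-u) * (Real.exp (2*|t|) * Real.exp (-t^2)) := by gcongr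

theorem integrable_gg1 (u : ℝ) :
    Integrable (fun t : ℝ => Complex.I * ((t:ℂ) + Complex.I) * gg u t) := by
  refine integrable_of_le_gauss (by unfold gg ff; fun_prop) (Real.exp (1/3 - u)) fun t => ?_
  rw [norm_mul, norm_mul, Complex.norm_I, one_mul, norm_gg]
  have h1 := (norm_t_add_I_le t).trans (abs_add_one_le' t)
  calc ‖(t:ℂ) + Complex.I‖ * (Real.exp (1/3-u) * Real.exp (-t^2))
      ≤ Real.exp (2*|t|) * (Real.exp (1/3-u) * Real.exp (-t^2)) := by gcongr
    _ = Real.exp (1/3-u) * (Real.exp (2*|t|) * Real.exp (-t^2)) := by ring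

theorem integrable_gg2 (u : ℝ) :
    Integrable (fun t : ℝ => (Complex.I * ((t:ℂ) + Complex.I))^2 * gg u t) := by
  refine integrable_of_le_gauss (by unfold gg ff; fun_prop) (Real.exp (1/3 - u)) fun t => ?_
  rw [norm_mul, norm_pow, norm_mul, Complex.norm_I, one_mul, norm_gg]
  have h1 : ‖(t:ℂ) + Complex.I‖^2 ≤ Real.exp (2*|t|) := by
    refine (pow_le_pow_left₀ (norm_nonneg _) (norm_t_add_I_le t) 2).trans (sq_abs_add_one_le t)
  calc ‖(t:ℂ) + Complex.I‖^2 * (Real.exp (1/3-u) * Real.exp (-t^2))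
      ≤ Real.exp (2*|t|) * (Real.exp (1/3-u) * Real.exp (-t^2)) := by gcongr
    _ = Real.exp (1/3-u) * (Real.exp (2*|t|) * Real.exp (-t^2)) := by ring

theorem integrable_gg3 (u : ℝ) :
    Integrable (fun t : ℝ => Complex.I * ((((t:ℂ) + Complex.I))^2 + u) * gg u t) := by
  refine integrable_of_le_gauss (by unfold gg ff; fun_prop)
    ((1 + |u|) * Real.exp (1/3 - u)) fun t => ?_
  rw [norm_mul, norm_mul, Complex.norm_I, one_mul, norm_gg]
  have h1 : ‖(((t:ℂ) + Complex.I))^2 + (u:ℂ)‖ ≤ (1 + |u|) * Real.exp (2*|t|) := by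
    refine (norm_add_le _ _).trans ?_
    rw [norm_pow]
    have h2 : ‖(t:ℂ) + Complex.I‖^2 ≤ Real.exp (2*|t|) :=
      (pow_le_pow_left₀ (norm_nonneg _) (norm_t_add_I_le t) 2).trans (sq_abs_add_one_le t)
    have h3 : ‖(u:ℂ)‖ = |u| := by simp [Complex.norm_real]
    have := one_le_gauss_fac t
    nlinarith [abs_nonneg u]
  calc ‖(((t:ℂ) + Complex.I))^2 + (u:ℂ)‖ * (Real.exp (1/3-u) * Real.exp (-t^2))
      ≤ ((1 + |u|) * Real.exp (2*|t|)) * (Real.exp (1/3-u) * Real.exp (-t^2)) := by gcongr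
    _ = (1 + |u|) * Real.exp (1/3-u) * (Real.exp (2*|t|) * Real.exp (-t^2)) := by ring

noncomputable def AA (u : ℝ) : ℂ := (1/(2*Real.pi) : ℂ) * ∫ t : ℝ, gg u t
noncomputable def AA1 (u : ℝ) : ℂ :=
  (1/(2*Real.pi) : ℂ) * ∫ t : ℝ, Complex.I * ((t:ℂ) + Complex.I) * gg u t

theorem bound_int (u : ℝ) :
    Integrable (fun t : ℝ => Real.exp (1/3 - u + 1) * (Real.exp (2*|t|) * Real.exp (-t^2))) :=
  (integrable_master 2).const_mul _

theorem ball_bound {u v : ℝ} (hv : v ∈ Metric.ball u 1) :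
    Real.exp (1/3 - v) ≤ Real.exp (1/3 - u + 1) := by
  rw [Metric.mem_ball, Real.dist_eq, abs_sub_lt_iff] at hv
  exact Real.exp_le_exp.2 (by linarith [hv.2])

theorem norm_gg1_le {u v : ℝ} (hv : v ∈ Metric.ball u 1) (t : ℝ) :
    ‖Complex.I * ((t:ℂ) + Complex.I) * gg v t‖
      ≤ Real.exp (1/3 - u + 1) * (Real.exp (2*|t|) * Real.exp (-t^2)) := by
  rw [norm_mul, norm_mul, Complex.norm_I, one_mul, norm_gg]
  have h1 := (norm_t_add_I_le t).trans (abs_add_one_le' t)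
  have h2 := ball_bound hv
  calc ‖(t:ℂ) + Complex.I‖ * (Real.exp (1/3-v) * Real.exp (-t^2))
      ≤ Real.exp (2*|t|) * (Real.exp (1/3 - u + 1) * Real.exp (-t^2)) := by gcongr
    _ = Real.exp (1/3 - u + 1) * (Real.exp (2*|t|) * Real.exp (-t^2)) := by ring

theorem hasDerivAt_int_gg (u : ℝ) :
    HasDerivAt (fun v : ℝ => ∫ t : ℝ, gg v t)
      (∫ t : ℝ, Complex.I * ((t:ℂ) + Complex.I) * gg u t) u := by
  refine (hasDerivAt_integral_of_dominated_loc_of_deriv_le (Metric.ball_mem_nhds u one_pos)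
    (Filter.Eventually.of_forall fun v => (continuous_gg v).aestronglyMeasurable)
    (integrable_gg u)
    ?_ (Filter.Eventually.of_forall fun t v hv => norm_gg1_le hv t) (bound_int u)
    (Filter.Eventually.of_forall fun t v _ => ?_)).2
  · exact (integrable_gg1 u).aestronglyMeasurable
  · exact hasDerivAt_ff_u ((t:ℂ) + Complex.I) v

theorem norm_gg2_le {u v : ℝ} (hv : v ∈ Metric.ball u 1) (t : ℝ) :
    ‖(Complex.I * ((t:ℂ) + Complex.I))^2 * gg v t‖
      ≤ Real.exp (1/3 - u + 1) * (Real.exp (2*|t|) * Real.exp (-t^2)) := by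
  rw [norm_mul, norm_pow, norm_mul, Complex.norm_I, one_mul, norm_gg]
  have h1 : ‖(t:ℂ) + Complex.I‖^2 ≤ Real.exp (2*|t|) :=
    (pow_le_pow_left₀ (norm_nonneg _) (norm_t_add_I_le t) 2).trans (sq_abs_add_one_le t)
  have h2 := ball_bound hv
  calc ‖(t:ℂ) + Complex.I‖^2 * (Real.exp (1/3-v) * Real.exp (-t^2))
      ≤ Real.exp (2*|t|) * (Real.exp (1/3 - u + 1) * Real.exp (-t^2)) := by gcongr
    _ = Real.exp (1/3 - u + 1) * (Real.exp (2*|t|) * Real.exp (-t^2)) := by ring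

theorem hasDerivAt_int_gg1 (u : ℝ) :
    HasDerivAt (fun v : ℝ => ∫ t : ℝ, Complex.I * ((t:ℂ) + Complex.I) * gg v t)
      (∫ t : ℝ, (Complex.I * ((t:ℂ) + Complex.I))^2 * gg u t) u := by
  refine (hasDerivAt_integral_of_dominated_loc_of_deriv_le (Metric.ball_mem_nhds u one_pos)
    (Filter.Eventually.of_forall fun v =>
      (Continuous.aestronglyMeasurable (by unfold gg ff; fun_prop)))
    (integrable_gg1 u)
    (integrable_gg2 u).aestronglyMeasurable
    (Filter.Eventually.of_forall fun t v hv => norm_gg2_le hv t) (bound_int u)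
    (Filter.Eventually.of_forall fun t v _ => ?_)).2
  have := (hasDerivAt_ff_u ((t:ℂ) + Complex.I) v).const_mul (Complex.I * ((t:ℂ) + Complex.I))
  exact this.congr_deriv (by rw [gg]; ring)

theorem tendsto_gauss_zero_atTop (u : ℝ) :
    Tendsto (fun t : ℝ => Real.exp (1/3-u) * Real.exp (-t^2)) atTop (𝓝 0) := by
  have h1 : Tendsto (fun t : ℝ => -t^2) atTop atBot :=
    tendsto_neg_atBot_iff.2 ((tendsto_pow_atTop two_ne_zero : Tendsto (fun x : ℝ => x^2) atTop atTop))
  have h2 : Tendsto (fun t : ℝ => Real.exp (-t^2)) atTop (𝓝 0) :=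
    Real.tendsto_exp_atBot.comp h1
  simpa using h2.const_mul (Real.exp (1/3-u))

theorem tendsto_gauss_zero_atBot (u : ℝ) :
    Tendsto (fun t : ℝ => Real.exp (1/3-u) * Real.exp (-t^2)) atBot (𝓝 0) := by
  have h0 : Tendsto (fun t : ℝ => t^2) atBot atTop := by
    have := ((tendsto_pow_atTop two_ne_zero : Tendsto (fun x : ℝ => x^2) atTop atTop)).comp tendsto_neg_atBot_atTop
    simpa [Function.comp_def, neg_sq] using this
  have h1 : Tendsto (fun t : ℝ => -t^2) atBot atBot := tendsto_neg_atBot_iff.2 h0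
  have h2 : Tendsto (fun t : ℝ => Real.exp (-t^2)) atBot (𝓝 0) :=
    Real.tendsto_exp_atBot.comp h1
  simpa using h2.const_mul (Real.exp (1/3-u))

theorem tendsto_gg_zero_atTop (u : ℝ) : Tendsto (fun t : ℝ => gg u t) atTop (𝓝 0) :=
  squeeze_zero_norm (fun t => (norm_gg u t).le) (tendsto_gauss_zero_atTop u)

theorem tendsto_gg_zero_atBot (u : ℝ) : Tendsto (fun t : ℝ => gg u t) atBot (𝓝 0) :=
  squeeze_zero_norm (fun t => (norm_gg u t).le) (tendsto_gauss_zero_atBot u)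

theorem key_zero (u : ℝ) :
    ∫ t : ℝ, Complex.I * ((((t:ℂ) + Complex.I))^2 + u) * gg u t = 0 := by
  have hIic := integral_Iic_of_hasDerivAt_of_tendsto' (a := (0:ℝ))
    (f := fun t : ℝ => gg u t)
    (f' := fun t : ℝ => Complex.I * ((((t:ℂ) + Complex.I))^2 + u) * gg u t)
    (fun t _ => hasDerivAt_gg_t u t) ((integrable_gg3 u).integrableOn) (tendsto_gg_zero_atBot u)
  have hIoi := integral_Ioi_of_hasDerivAt_of_tendsto' (a := (0:ℝ))
    (f := fun t : ℝ => gg u t)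
    (f' := fun t : ℝ => Complex.I * ((((t:ℂ) + Complex.I))^2 + u) * gg u t)
    (fun t _ => hasDerivAt_gg_t u t) ((integrable_gg3 u).integrableOn) (tendsto_gg_zero_atTop u)
  rw [← intervalIntegral.integral_Iic_add_Ioi (b := (0:ℝ)) (integrable_gg3 u).integrableOn
      (integrable_gg3 u).integrableOn, hIic, hIoi]
  abel

theorem hasDerivAt_AA (u : ℝ) : HasDerivAt AA (AA1 u) u :=
  (hasDerivAt_int_gg u).const_mul _

theorem int_gg2_eq (u : ℝ) :
    ∫ t : ℝ, (Complex.I * ((t:ℂ) + Complex.I))^2 * gg u t = (u:ℂ) * ∫ t : ℝ, gg u t := by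
  have h0 := key_zero u
  have hsplit : (fun t : ℝ => Complex.I * ((((t:ℂ) + Complex.I))^2 + u) * gg u t)
      = fun t : ℝ => (-Complex.I) * ((Complex.I * ((t:ℂ) + Complex.I))^2 * gg u t)
        + (Complex.I * u) * gg u t := by
    funext t
    rw [mul_pow, Complex.I_sq]
    ring
  rw [hsplit, integral_add ((integrable_gg2 u).const_mul _) ((integrable_gg u).const_mul _),
    integral_const_mul, integral_const_mul] at h0
  set X := ∫ t : ℝ, (Complex.I * ((t:ℂ) + Complex.I))^2 * gg u t
  set Y := ∫ t : ℝ, gg u t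
  linear_combination Complex.I * h0 + (X - (u:ℂ)*Y) * Complex.I_mul_I

theorem hasDerivAt_AA1 (u : ℝ) : HasDerivAt AA1 ((u:ℂ) * AA u) u := by
  have h := (hasDerivAt_int_gg1 u).const_mul ((1/(2*Real.pi) : ℝ) : ℂ)
  rw [int_gg2_eq] at h
  have : ((1/(2*Real.pi) : ℝ) : ℂ) * ((u:ℂ) * ∫ t : ℝ, gg u t) = (u:ℂ) * AA u := by
    rw [AA]; push_cast; ring
  rw [this] at h
  have hA : AA1 = fun v : ℝ => ((1/(2*Real.pi) : ℝ) : ℂ) *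
      ∫ t : ℝ, Complex.I * ((t:ℂ) + Complex.I) * gg v t := by
    funext v
    rw [AA1]
    push_cast
    ring
  rw [hA]
  exact h

noncomputable def CC : ℝ := ∫ t : ℝ, Real.exp (2*|t|) * Real.exp (-t^2)

theorem norm_int_gg_le (u : ℝ) : ‖∫ t : ℝ, gg u t‖ ≤ Real.exp (1/3 - u) * CC := by
  refine (norm_integral_le_integral_norm _).trans ?_
  rw [CC, ← integral_const_mul]
  refine integral_mono (by simpa [norm_gg] using (integrable_gg u).norm)
    ((integrable_master 2).const_mul _) fun t => ?_
  rw [norm_gg]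
  have h1 := one_le_gauss_fac t
  calc Real.exp (1/3-u) * Real.exp (-t^2) = Real.exp (1/3-u) * (1 * Real.exp (-t^2)) := by ring
    _ ≤ Real.exp (1/3-u) * (Real.exp (2*|t|) * Real.exp (-t^2)) := by gcongr

theorem norm_int_gg1_le (u : ℝ) :
    ‖∫ t : ℝ, Complex.I * ((t:ℂ) + Complex.I) * gg u t‖ ≤ Real.exp (1/3 - u) * CC := by
  refine (norm_integral_le_integral_norm _).trans ?_
  rw [CC, ← integral_const_mul]
  refine integral_mono ((integrable_gg1 u).norm) ((integrable_master 2).const_mul _) fun t => ?_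
  rw [norm_mul, norm_mul, Complex.norm_I, one_mul, norm_gg]
  have h1 := (norm_t_add_I_le t).trans (abs_add_one_le' t)
  calc ‖(t:ℂ) + Complex.I‖ * (Real.exp (1/3-u) * Real.exp (-t^2))
      ≤ Real.exp (2*|t|) * (Real.exp (1/3-u) * Real.exp (-t^2)) := by gcongr
    _ = Real.exp (1/3-u) * (Real.exp (2*|t|) * Real.exp (-t^2)) := by ring

theorem norm_AA_le (u : ℝ) : ‖AA u‖ ≤ |1/(2*Real.pi)| * (Real.exp (1/3) * CC) * Real.exp (-u) := by
  rw [AA, norm_mul]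
  have h1 : ‖((1/(2*Real.pi) : ℂ))‖ = |1/(2*Real.pi)| := by
    rw [show ((1/(2*Real.pi) : ℂ)) = (((1/(2*Real.pi) : ℝ)) : ℂ) by push_cast; ring,
      Complex.norm_real, Real.norm_eq_abs]
  rw [h1]
  have h2 := norm_int_gg_le u
  have h3 : Real.exp (1/3 - u) = Real.exp (1/3) * Real.exp (-u) := by
    rw [← Real.exp_add]; ring_nf
  calc |1/(2*Real.pi)| * ‖∫ t : ℝ, gg u t‖ ≤ |1/(2*Real.pi)| * (Real.exp (1/3 - u) * CC) := by
        gcongr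
    _ = |1/(2*Real.pi)| * (Real.exp (1/3) * CC) * Real.exp (-u) := by rw [h3]; ring

theorem norm_AA1_le (u : ℝ) : ‖AA1 u‖ ≤ |1/(2*Real.pi)| * (Real.exp (1/3) * CC) * Real.exp (-u) := by
  rw [AA1, norm_mul]
  have h1 : ‖((1/(2*Real.pi) : ℂ))‖ = |1/(2*Real.pi)| := by
    rw [show ((1/(2*Real.pi) : ℂ)) = (((1/(2*Real.pi) : ℝ)) : ℂ) by push_cast; ring,
      Complex.norm_real, Real.norm_eq_abs]
  rw [h1]
  have h2 := norm_int_gg1_le u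
  have h3 : Real.exp (1/3 - u) = Real.exp (1/3) * Real.exp (-u) := by
    rw [← Real.exp_add]; ring_nf
  calc |1/(2*Real.pi)| * ‖∫ t : ℝ, Complex.I * ((t:ℂ) + Complex.I) * gg u t‖
      ≤ |1/(2*Real.pi)| * (Real.exp (1/3 - u) * CC) := by gcongr
    _ = |1/(2*Real.pi)| * (Real.exp (1/3) * CC) * Real.exp (-u) := by rw [h3]; ring

theorem ff_entire (x : ℝ) : Differentiable ℂ (fun w => ff x w) := by
  unfold ff; fun_prop

theorem rect_id (x B : ℝ) :
    ∫ t in (-B:ℝ)..B, ff x ((t:ℂ))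
      = (∫ t in (-B:ℝ)..B, gg x t)
        - Complex.I • (∫ y in (0:ℝ)..1, ff x ((B:ℂ) + (y:ℂ)*Complex.I))
        + Complex.I • (∫ y in (0:ℝ)..1, ff x (-(B:ℂ) + (y:ℂ)*Complex.I)) := by
  have h := Complex.integral_boundary_rect_eq_zero_of_differentiableOn (fun w => ff x w)
    (((-B : ℝ)) : ℂ) ((B:ℂ) + Complex.I) ((ff_entire x).differentiableOn)
  simp only [Complex.ofReal_re, Complex.ofReal_im, Complex.add_re, Complex.add_im,
    Complex.I_re, Complex.I_im, Complex.ofReal_neg, Complex.ofReal_zero, Complex.ofReal_one,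
    zero_mul, add_zero, one_mul, add_im, add_re] at h
  norm_num at h
  have h2 : ∀ t : ℝ, ff x ((t:ℂ) + Complex.I) = gg x t := fun t => rfl
  simp only [h2] at h
  simp only [smul_eq_mul] at h ⊢
  linear_combination h

theorem vert_bound (x : ℝ) {s : ℝ} (hs : 1 ≤ |s|) :
    ‖∫ y in (0:ℝ)..1, ff x ((s:ℂ) + (y:ℂ)*Complex.I)‖ ≤ Real.exp (1/3 + |x|) / s^2 := by
  have hs2 : (0:ℝ) < s^2 := by nlinarith [_root_.sq_abs s, abs_nonneg s]
  have hs2' : (1:ℝ) ≤ s^2 := by nlinarith [_root_.sq_abs s]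
  have hb : ∀ᵐ y : ℝ ∂(volume.restrict (Set.uIoc (0:ℝ) 1)),
      ‖ff x ((s:ℂ) + (y:ℂ)*Complex.I)‖ ≤ Real.exp (1/3 + |x|) * Real.exp (-s^2*y) := by
    rw [uIoc_of_le (by norm_num : (0:ℝ) ≤ 1)]
    filter_upwards [ae_restrict_mem measurableSet_Ioc] with y hy
    rw [norm_ff]
    rw [← Real.exp_add]
    apply Real.exp_le_exp.2
    obtain ⟨hy0, hy1⟩ := hy
    have h1 : y^3 ≤ 1 := pow_le_one₀ hy0.le hy1
    have h2 : -(x*y) ≤ |x| := by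
      have : |x*y| ≤ |x| := by
        rw [abs_mul]
        nlinarith [abs_nonneg x, abs_of_pos hy0]
      linarith [neg_abs_le (x*y)]
    nlinarith
  have hgint : IntervalIntegrable (fun y => Real.exp (1/3 + |x|) * Real.exp (-s^2*y))
      volume 0 1 := (Continuous.intervalIntegrable (by fun_prop) _ _)
  refine (intervalIntegral.norm_integral_le_abs_of_norm_le hb hgint).trans ?_
  have hval : ∫ y in (0:ℝ)..1, Real.exp (-s^2*y)
      = (-s^2)⁻¹ * (Real.exp (-s^2) - 1) := by
    rw [show (fun y : ℝ => Real.exp (-s^2*y)) = fun y : ℝ => Real.exp (-s^2*y) from rfl]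
    rw [intervalIntegral.integral_comp_mul_left (fun u => Real.exp u) (by nlinarith : -s^2 ≠ 0)]
    simp [integral_exp]
  rw [intervalIntegral.integral_const_mul, hval]
  have hpos : (0:ℝ) < Real.exp (1/3 + |x|) := Real.exp_pos _
  have hee : Real.exp (-s^2) ≤ 1 := Real.exp_le_one_iff.2 (by nlinarith)
  have heq : (-s^2)⁻¹ * (Real.exp (-s^2) - 1) = (1 - Real.exp (-s^2))/s^2 := by
    rw [inv_neg, div_eq_mul_inv]
    ring
  have habs : |Real.exp (1/3 + |x|) * ((-s^2)⁻¹ * (Real.exp (-s^2) - 1))|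
      = Real.exp (1/3 + |x|) * ((1 - Real.exp (-s^2))/s^2) := by
    rw [heq, _root_.abs_of_nonneg (mul_nonneg hpos.le (div_nonneg (by linarith) hs2.le))]
  rw [habs]
  calc Real.exp (1/3 + |x|) * ((1 - Real.exp (-s^2))/s^2)
      ≤ Real.exp (1/3 + |x|) * (1/s^2) := by
        gcongr
        nlinarith [Real.exp_pos (-s^2)]
    _ = Real.exp (1/3 + |x|) / s^2 := by ring

theorem vert_tendsto_pos (x : ℝ) :
    Tendsto (fun B : ℝ => ∫ y in (0:ℝ)..1, ff x ((B:ℂ) + (y:ℂ)*Complex.I)) atTop (𝓝 0) := by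
  apply squeeze_zero_norm' (a := fun B => Real.exp (1/3 + |x|) / B^2)
  · filter_upwards [eventually_ge_atTop (1:ℝ)] with B hB
    exact vert_bound x (by rwa [_root_.abs_of_nonneg (by linarith : (0:ℝ) ≤ B)])
  · have h1 : Tendsto (fun B : ℝ => B^2) atTop atTop :=
      tendsto_pow_atTop two_ne_zero
    simpa [div_eq_mul_inv] using h1.inv_tendsto_atTop.const_mul (Real.exp (1/3 + |x|))

theorem vert_tendsto_neg (x : ℝ) :
    Tendsto (fun B : ℝ => ∫ y in (0:ℝ)..1, ff x (-(B:ℂ) + (y:ℂ)*Complex.I)) atTop (𝓝 0) := by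
  apply squeeze_zero_norm' (a := fun B => Real.exp (1/3 + |x|) / B^2)
  · filter_upwards [eventually_ge_atTop (1:ℝ)] with B hB
    have := vert_bound x (s := -B) (by rw [abs_neg, _root_.abs_of_nonneg (by linarith : (0:ℝ) ≤ B)]; exact hB)
    simp only [Complex.ofReal_neg, neg_sq] at this ⊢
    exact this
  · have h1 : Tendsto (fun B : ℝ => B^2) atTop atTop :=
      tendsto_pow_atTop two_ne_zero
    simpa [div_eq_mul_inv] using h1.inv_tendsto_atTop.const_mul (Real.exp (1/3 + |x|))

theorem tendsto_scaled (x : ℝ) :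
    Tendsto (fun B : ℝ => (1 / (2 * Real.pi) : ℂ) *
        ∫ t in (-B)..B, Complex.exp (Complex.I * ((t : ℂ) ^ 3 / 3 + (t : ℂ) * (x : ℂ))))
      atTop (𝓝 (AA x)) := by
  have hmain : Tendsto (fun B : ℝ => ∫ t in (-B:ℝ)..B, ff x ((t:ℂ))) atTop
      (𝓝 (∫ t : ℝ, gg x t)) := by
    have T1 : Tendsto (fun B : ℝ => ∫ t in (-B:ℝ)..B, gg x t) atTop (𝓝 (∫ t : ℝ, gg x t)) :=
      intervalIntegral_tendsto_integral (integrable_gg x) tendsto_neg_atTop_atBot tendsto_id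
    have T2 := (vert_tendsto_pos x).const_smul (Complex.I)
    have T3 := (vert_tendsto_neg x).const_smul (Complex.I)
    have := (T1.sub T2).add T3
    simp only [smul_zero, sub_zero, add_zero] at this
    exact this.congr fun B => (rect_id x B).symm
  have heq : ∀ B : ℝ, (∫ t in (-B:ℝ)..B, ff x ((t:ℂ)))
      = ∫ t in (-B:ℝ)..B, Complex.exp (Complex.I * ((t : ℂ) ^ 3 / 3 + (t : ℂ) * (x : ℂ))) :=
    fun B => rfl
  rw [show AA x = (1 / (2 * Real.pi) : ℂ) * ∫ t : ℝ, gg x t from rfl]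
  exact (hmain.const_mul _).congr fun B => by rw [← heq]

noncomputable def aa (u : ℝ) : ℝ := (AA u).re
noncomputable def aa1 (u : ℝ) : ℝ := (AA1 u).re
noncomputable def KK : ℝ := |1/(2*Real.pi)| * (Real.exp (1/3) * CC)

theorem hasDerivAt_aa (u : ℝ) : HasDerivAt aa (aa1 u) u := by
  have := Complex.reCLM.hasFDerivAt.comp_hasDerivAt u (hasDerivAt_AA u)
  exact this

theorem hasDerivAt_aa1 (u : ℝ) : HasDerivAt aa1 (u * aa u) u := by
  have := Complex.reCLM.hasFDerivAt.comp_hasDerivAt u (hasDerivAt_AA1 u)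
  exact this.congr_deriv (by simp [aa])

theorem KK_nonneg : 0 ≤ KK := by
  have hCC : 0 ≤ CC := integral_nonneg fun t => by positivity
  rw [KK]
  positivity

theorem abs_aa_le (u : ℝ) : |aa u| ≤ KK * Real.exp (-u) := by
  refine le_trans ?_ (norm_AA_le u)
  exact Complex.abs_re_le_norm _

theorem abs_aa1_le (u : ℝ) : |aa1 u| ≤ KK * Real.exp (-u) := by
  refine le_trans ?_ (norm_AA1_le u)
  exact Complex.abs_re_le_norm _

theorem tendsto_KKexp : Tendsto (fun u : ℝ => KK * Real.exp (-u)) atTop (𝓝 0) := by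
  have h : Tendsto (fun u : ℝ => Real.exp (-u)) atTop (𝓝 0) :=
    Real.tendsto_exp_atBot.comp tendsto_neg_atTop_atBot
  simpa using h.const_mul KK

theorem tendsto_aa : Tendsto aa atTop (𝓝 0) :=
  squeeze_zero_norm (fun u => abs_aa_le u) tendsto_KKexp

theorem tendsto_aa1 : Tendsto aa1 atTop (𝓝 0) :=
  squeeze_zero_norm (fun u => abs_aa1_le u) tendsto_KKexp

theorem continuous_aa : Continuous aa :=
  continuous_iff_continuousAt.2 fun u => (hasDerivAt_aa u).continuousAt

theorem hasDerivAt_aa_shift (c : ℝ) (z : ℝ) :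
    HasDerivAt (fun z : ℝ => aa (c + z)) (aa1 (c + z)) z := by
  have := (hasDerivAt_aa (c + z)).comp z ((hasDerivAt_id z).const_add c)
  simpa [Function.comp_def] using this

theorem hasDerivAt_aa1_shift (c : ℝ) (z : ℝ) :
    HasDerivAt (fun z : ℝ => aa1 (c + z)) ((c + z) * aa (c + z)) z := by
  have := (hasDerivAt_aa1 (c + z)).comp z ((hasDerivAt_id z).const_add c)
  simpa [Function.comp_def] using this

theorem kernel_integrable (x y : ℝ) :
    IntegrableOn (fun z : ℝ => aa (x + z) * aa (y + z)) (Ioi 0) volume := by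
  have hbig : IntegrableOn (fun z : ℝ => (KK^2 * Real.exp (-x-y)) * Real.exp (-2*z))
      (Ioi 0) volume := (exp_neg_integrableOn_Ioi 0 (by norm_num : (0:ℝ) < 2)).const_mul _
  refine hbig.mono' ((continuous_aa.comp (continuous_const.add continuous_id)).mul
    (continuous_aa.comp (continuous_const.add continuous_id))).aestronglyMeasurable ?_
  filter_upwards with z
  rw [Real.norm_eq_abs, abs_mul]
  calc |aa (x+z)| * |aa (y+z)| ≤ (KK * Real.exp (-(x+z))) * (KK * Real.exp (-(y+z))) := by
        have h1 := abs_aa_le (x+z)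
        have h2 := abs_aa_le (y+z)
        exact mul_le_mul h1 h2 (abs_nonneg _) (mul_nonneg KK_nonneg (Real.exp_pos _).le)
    _ = (KK^2 * Real.exp (-x-y)) * Real.exp (-2*z) := by
        rw [show (-(x+z)) = (-x) + (-z) by ring, show (-(y+z)) = (-y) + (-z) by ring,
          Real.exp_add, Real.exp_add, show (-x-y : ℝ) = (-x) + (-y) by ring, Real.exp_add,
          show (-2*z : ℝ) = (-z) + (-z) by ring, Real.exp_add]
        ring

/-- For all real `x ≠ y`, the Airy kernel satisfies
`∫_0^∞ Ai(x+z) Ai(y+z) dz = (Ai(x) Ai'(y) − Ai(y) Ai'(x)) / (x − y)`,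
where `Ai` is the Airy function, characterized by
`Ai(x) = lim_{B→∞} (1/(2π)) ∫_{-B}^{B} e^{i(t³/3 + tx)} dt`; `Ai` is differentiable
and the integral on the left converges (is absolutely integrable on `(0, ∞)`). -/
theorem airy_kernel_formula
    (Ai : ℝ → ℝ)
    (hAi : ∀ x : ℝ, Tendsto
      (fun B : ℝ => (1 / (2 * Real.pi) : ℂ) *
        ∫ t in (-B)..B, Complex.exp (Complex.I * ((t : ℂ) ^ 3 / 3 + (t : ℂ) * (x : ℂ))))
      atTop (nhds ((Ai x : ℝ) : ℂ)))
    (hAidiff : Differentiable ℝ Ai)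
    (x y : ℝ) (hxy : x ≠ y) :
    IntegrableOn (fun z : ℝ => Ai (x + z) * Ai (y + z)) (Ioi 0) volume ∧
    ∫ z in Ioi (0 : ℝ), Ai (x + z) * Ai (y + z) =
      (Ai x * deriv Ai y - Ai y * deriv Ai x) / (x - y) := by
  have hAeq : ∀ u : ℝ, ((Ai u : ℝ) : ℂ) = AA u := fun u =>
    tendsto_nhds_unique (hAi u) (tendsto_scaled u)
  have hfun : Ai = aa := funext fun u => by
    have := congrArg Complex.re (hAeq u)
    simpa [aa] using this
  have hk := kernel_integrable x y
  refine ⟨by rw [hfun]; exact hk, ?_⟩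
  set F : ℝ → ℝ := fun z => aa (x+z) * aa1 (y+z) - aa1 (x+z) * aa (y+z) with hF
  have hders : ∀ z : ℝ, HasDerivAt F ((y - x) * (aa (x+z) * aa (y+z))) z := by
    intro z
    have h := ((hasDerivAt_aa_shift x z).mul (hasDerivAt_aa1_shift y z)).sub
      ((hasDerivAt_aa1_shift x z).mul (hasDerivAt_aa_shift y z))
    exact h.congr_deriv (by ring)
  have hF0 : Tendsto F atTop (𝓝 0) := by
    have hsh : ∀ c : ℝ, Tendsto (fun z : ℝ => c + z) atTop atTop := fun c =>
      tendsto_atTop_add_const_left atTop c tendsto_id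
    have hx1 : Tendsto (fun z : ℝ => aa (x+z)) atTop (𝓝 0) := tendsto_aa.comp (hsh x)
    have hy1 : Tendsto (fun z : ℝ => aa (y+z)) atTop (𝓝 0) := tendsto_aa.comp (hsh y)
    have hx2 : Tendsto (fun z : ℝ => aa1 (x+z)) atTop (𝓝 0) := tendsto_aa1.comp (hsh x)
    have hy2 : Tendsto (fun z : ℝ => aa1 (y+z)) atTop (𝓝 0) := tendsto_aa1.comp (hsh y)
    have := (hx1.mul hy2).sub (hx2.mul hy1)
    simpa using this
  have hint : IntegrableOn (fun z : ℝ => (y - x) * (aa (x+z) * aa (y+z))) (Ioi 0) volume :=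
    hk.const_mul _
  have heq := integral_Ioi_of_hasDerivAt_of_tendsto' (fun z _ => hders z) hint hF0
  have hmul : (y - x) * ∫ z in Ioi (0:ℝ), aa (x+z) * aa (y+z) = -(F 0) := by
    rw [← integral_const_mul, heq]
    ring
  have hF0v : F 0 = aa x * aa1 y - aa1 x * aa y := by simp [hF]
  have hdx : deriv aa x = aa1 x := (hasDerivAt_aa x).deriv
  have hdy : deriv aa y = aa1 y := (hasDerivAt_aa y).deriv
  rw [hfun, hdx, hdy]
  have hxysub : x - y ≠ 0 := sub_ne_zero.2 hxy
  rw [eq_div_iff hxysub]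
  linear_combination -hmul + hF0v
end
end

section
/- For every real η and every Schwartz function φ : ℝ → ℂ, the operator M_h ∘ 𝓕⁻¹ ∘ M_{e_η} ∘ 𝓕 ∘ M_{h⁻¹} applied to φ gives, for every ξ ∈ ℝ: (M_h 𝓕⁻¹ M_{e_η} 𝓕 M_{h⁻¹} φ)(ξ) = (2π)^{-1/2} e^{-i(ξ²η + ξη² + η³/3)} φ(ξ + η). -/
open MeasureTheory Complex Filter Set FourierTransform Real

noncomputable section

def ee : ℝ → ℂ := fun t ↦ Complex.exp (-Complex.I * (t : ℂ) ^ 3 / 3)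

lemma norm_ee (t : ℝ) : ‖ee t‖ = 1 := by
  have : -Complex.I * (t : ℂ) ^ 3 / 3 = ((-(t ^ 3) / 3 : ℝ) : ℂ) * Complex.I := by
    push_cast; ring
  rw [ee, this, Complex.norm_exp]
  simp [← Complex.ofReal_pow]

lemma hasDerivAt_ee (t : ℝ) :
    HasDerivAt ee (-Complex.I * (t : ℂ) ^ 2 * ee t) t := by
  have h1 : HasDerivAt (fun z : ℂ ↦ -Complex.I * z ^ 3 / 3) (-Complex.I * (t : ℂ) ^ 2) (t : ℂ) := by
    have := ((hasDerivAt_pow 3 (t : ℂ)).const_mul (-Complex.I)).div_const 3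
    exact this.congr_deriv (by norm_num; ring)
  have h2 := (h1.cexp).comp_ofReal
  convert h2 using 1
  · rfl
  simp only [ee]; ring

lemma iteratedDeriv_ee (n : ℕ) : ∃ p : Polynomial ℂ, ∀ t : ℝ,
    iteratedDeriv n ee t = p.eval (t : ℂ) * ee t := by
  induction n with
  | zero => exact ⟨1, by simp [iteratedDeriv_zero]⟩
  | succ n ih =>
    obtain ⟨p, hp⟩ := ih
    refine ⟨Polynomial.derivative p +
      p * (Polynomial.C (-Complex.I) * Polynomial.X ^ 2), fun t ↦ ?_⟩
    rw [iteratedDeriv_succ,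
      show iteratedDeriv n ee = fun s : ℝ ↦ p.eval (s : ℂ) * ee s from funext hp]
    have hd : HasDerivAt (fun s : ℝ ↦ p.eval (s : ℂ) * ee s)
        ((Polynomial.derivative p).eval (t : ℂ) * ee t +
          p.eval (t : ℂ) * (-Complex.I * (t : ℂ) ^ 2 * ee t)) t :=
      ((p.hasDerivAt (t : ℂ)).comp_ofReal).mul (hasDerivAt_ee t)
    rw [hd.deriv]
    simp only [Polynomial.eval_add, Polynomial.eval_mul, Polynomial.eval_C,
      Polynomial.eval_X, Polynomial.eval_pow]
    ring

lemma poly_bound (p : Polynomial ℂ) : ∃ C : ℝ, ∀ t : ℝ,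
    ‖p.eval (t : ℂ)‖ ≤ C * (1 + ‖t‖) ^ p.natDegree := by
  refine ⟨∑ i ∈ Finset.range (p.natDegree + 1), ‖p.coeff i‖, fun t ↦ ?_⟩
  rw [Polynomial.eval_eq_sum_range, Finset.sum_mul]
  refine (norm_sum_le _ _).trans (Finset.sum_le_sum fun i hi ↦ ?_)
  rw [norm_mul, norm_pow, Complex.norm_real]
  gcongr
  calc ‖t‖ ^ i ≤ (1 + ‖t‖) ^ i := by gcongr; linarith [norm_nonneg t]
    _ ≤ (1 + ‖t‖) ^ p.natDegree := by
        apply pow_le_pow_right₀ (by linarith [norm_nonneg t])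
        exact Nat.lt_succ_iff.mp (Finset.mem_range.mp hi)

lemma ee_temperate : Function.HasTemperateGrowth ee := by
  refine ⟨?_, fun n ↦ ?_⟩
  · have h1 : ContDiff ℝ ((⊤ : ℕ∞) : WithTop ℕ∞) (fun t : ℝ ↦ -Complex.I * (t : ℂ) ^ 3 / 3) :=
      (contDiff_const.mul ((Complex.ofRealCLM.contDiff).pow 3)).div_const 3
    exact h1.cexp
  · obtain ⟨p, hp⟩ := iteratedDeriv_ee n
    obtain ⟨C, hC⟩ := poly_bound p
    refine ⟨p.natDegree, C, fun t ↦ ?_⟩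
    rw [norm_iteratedFDeriv_eq_norm_iteratedDeriv, hp t, norm_mul, norm_ee, mul_one]
    exact hC t

/-- For every real `η` and every Schwartz function `φ`, the operator
`M_h ∘ 𝓕⁻¹ ∘ M_{e_η} ∘ 𝓕 ∘ M_{h⁻¹}` (with `h(t) = e^{it³/3}` and
`e_η(x) = e^{iηx}/√(2π)`) applied to `φ` gives, for every `ξ ∈ ℝ`,
`(2π)^{-1/2} e^{-i(ξ²η + ξη² + η³/3)} φ(ξ + η)`.  All the transforms are written out
as (absolutely convergent) integrals: `𝓕 g(x) = (2π)^{-1/2} ∫ g(t) e^{-ixt} dt` and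
`𝓕⁻¹ g(ξ) = (2π)^{-1/2} ∫ g(x) e^{iξx} dx`. -/

theorem conjugated_translation_formula
    (η : ℝ) (φ : SchwartzMap ℝ ℂ) (ξ : ℝ) :
    Complex.exp (Complex.I * (ξ : ℂ) ^ 3 / 3) *
      ((((2 * Real.pi : ℝ) ^ (-(1 : ℝ) / 2) : ℝ) : ℂ) *
        ∫ x : ℝ,
          ((Complex.exp (Complex.I * (η : ℂ) * (x : ℂ)) / (Real.sqrt (2 * Real.pi) : ℂ)) *
            ((((2 * Real.pi : ℝ) ^ (-(1 : ℝ) / 2) : ℝ) : ℂ) *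
              ∫ t : ℝ, Complex.exp (-Complex.I * (t : ℂ) ^ 3 / 3) * φ t *
                Complex.exp (-Complex.I * (x : ℂ) * (t : ℂ)))) *
            Complex.exp (Complex.I * (ξ : ℂ) * (x : ℂ)))
    = (((2 * Real.pi : ℝ) ^ (-(1 : ℝ) / 2) : ℝ) : ℂ) *
        Complex.exp (-Complex.I * ((ξ : ℂ) ^ 2 * (η : ℂ) + (ξ : ℂ) * (η : ℂ) ^ 2 +
          (η : ℂ) ^ 3 / 3)) * φ (ξ + η) := by
  have h2π : (0:ℝ) < 2 * Real.pi := by positivity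
  set c : ℝ := (2 * Real.pi) ^ (-(1:ℝ)/2) with hc
  set s : ℝ := Real.sqrt (2 * Real.pi) with hs
  set g : SchwartzMap ℝ ℂ :=
    SchwartzMap.bilinLeftCLM (ContinuousLinearMap.mul ℝ ℂ) ee_temperate φ with hgdef
  have hgapp : ∀ t : ℝ, g t = φ t * ee t := fun t ↦ rfl
  -- Fourier inversion for g
  have hginv : 𝓕⁻ (𝓕 ⇑g) (ξ + η) = g (ξ + η) := by
    refine MeasureTheory.Integrable.fourierInv_fourier_eq (g.integrable (μ := volume)) ?_ g.continuous.continuousAt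
    have := (SchwartzMap.fourierTransformCLM ℂ g).integrable (μ := volume)
    rwa [SchwartzMap.fourierTransformCLM_apply, SchwartzMap.fourier_coe] at this
  -- inner integral is the Fourier transform of g
  have hinner : ∀ x : ℝ,
      (∫ t : ℝ, Complex.exp (-Complex.I * (t : ℂ) ^ 3 / 3) * φ t *
        Complex.exp (-Complex.I * (x : ℂ) * (t : ℂ)))
      = 𝓕 ⇑g (x / (2 * Real.pi)) := by
    intro x
    rw [Real.fourier_eq']
    refine integral_congr_ae (Eventually.of_forall fun t ↦ ?_)
    beta_reduce
    have harg : -2 * Real.pi * (inner ℝ t (x / (2 * Real.pi)) : ℝ) = -(x * t) := by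
      simp only [RCLike.inner_apply, conj_trivial]
      field_simp
    rw [harg, hgapp t, smul_eq_mul, ee]
    push_cast
    rw [show ((-(x * t) : ℂ)) * Complex.I = -Complex.I * x * t by ring]
    ring
  simp_rw [hinner]
  -- outer integrand
  have houter : ∀ x : ℝ,
      (Complex.exp (Complex.I * (η : ℂ) * (x : ℂ)) / (s : ℂ)) *
        (((c : ℝ) : ℂ) * 𝓕 ⇑g (x / (2 * Real.pi))) *
        Complex.exp (Complex.I * (ξ : ℂ) * (x : ℂ))
      = (((c : ℝ) : ℂ) / (s : ℂ)) *
          (𝓕 ⇑g (x / (2 * Real.pi)) *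
            Complex.exp (((2 * Real.pi * ((x / (2 * Real.pi)) * (ξ + η)) : ℝ) : ℂ) * Complex.I)) := by
    intro x
    have harg : (2 * Real.pi * ((x / (2 * Real.pi)) * (ξ + η)) : ℝ) = x * (ξ + η) := by
      field_simp; try ring
    rw [harg, show (((x * (ξ + η) : ℝ) : ℂ)) * Complex.I
        = Complex.I * η * x + Complex.I * ξ * x by push_cast; try ring, Complex.exp_add]
    ring
  simp_rw [houter, integral_const_mul]
  -- change of variables
  have hcomp : (∫ x : ℝ, 𝓕 ⇑g (x / (2 * Real.pi)) *
      Complex.exp (((2 * Real.pi * ((x / (2 * Real.pi)) * (ξ + η)) : ℝ) : ℂ) * Complex.I))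
      = |2 * Real.pi| • ∫ u : ℝ, 𝓕 ⇑g u *
          Complex.exp (((2 * Real.pi * (u * (ξ + η)) : ℝ) : ℂ) * Complex.I) := by
    exact MeasureTheory.Measure.integral_comp_div
      (fun u : ℝ ↦ 𝓕 ⇑g u * Complex.exp (((2 * Real.pi * (u * (ξ + η)) : ℝ) : ℂ) * Complex.I))
      (2 * Real.pi)
  rw [hcomp]
  -- recognize the inverse Fourier transform
  have hback : (∫ u : ℝ, 𝓕 ⇑g u *
      Complex.exp (((2 * Real.pi * (u * (ξ + η)) : ℝ) : ℂ) * Complex.I))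
      = 𝓕⁻ (𝓕 ⇑g) (ξ + η) := by
    rw [Real.fourierInv_eq']
    refine integral_congr_ae (Eventually.of_forall fun u ↦ ?_)
    beta_reduce
    have : (2 * Real.pi * (inner ℝ u (ξ + η) : ℝ) : ℝ) = 2 * Real.pi * (u * (ξ + η)) := by
      simp [RCLike.inner_apply]
      ring
    rw [this, smul_eq_mul]
    ring
  rw [hback, hginv, hgapp]
  -- final algebra
  rw [abs_of_pos h2π]
  have hconst : ((c : ℝ) : ℂ) * (((c : ℝ) : ℂ) / (s : ℂ) * ((2 * Real.pi : ℝ) •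
      (φ (ξ + η) * ee (ξ + η)))) = ((c : ℝ) : ℂ) * (φ (ξ + η) * ee (ξ + η)) := by
    rw [real_smul]
    have hcs : (c * (c / s) * (2 * Real.pi) : ℝ) = c := by
      have hs0 : s ≠ 0 := by rw [hs]; positivity
      have hss : s * s = 2 * Real.pi := Real.mul_self_sqrt h2π.le
      have hc' : c = s⁻¹ := by
        rw [hc, hs, Real.sqrt_eq_rpow, ← Real.rpow_neg h2π.le]
        norm_num
      rw [hc', ← hss]
      field_simp
      try ring
    calc ((c : ℝ) : ℂ) * (((c : ℝ) : ℂ) / (s : ℂ) * (((2 * Real.pi : ℝ) : ℂ) *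
          (φ (ξ + η) * ee (ξ + η))))
        = (((c * (c / s) * (2 * Real.pi) : ℝ) : ℂ)) * (φ (ξ + η) * ee (ξ + η)) := by
          push_cast; ring
      _ = _ := by rw [hcs]
  rw [hconst]
  rw [ee]
  have hexp : Complex.exp (Complex.I * (ξ:ℂ)^3/3) *
      Complex.exp (-Complex.I * (((ξ + η : ℝ)):ℂ)^3 / 3)
      = Complex.exp (-Complex.I * ((ξ:ℂ)^2 * η + (ξ:ℂ) * (η:ℂ)^2 + (η:ℂ)^3/3)) := by
    rw [← Complex.exp_add]
    congr 1
    push_cast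
    ring
  calc Complex.exp (Complex.I * (ξ:ℂ)^3/3) * (((c:ℝ):ℂ) * (φ (ξ+η) *
        Complex.exp (-Complex.I * (((ξ + η : ℝ)):ℂ)^3 / 3)))
      = ((c:ℝ):ℂ) * (Complex.exp (Complex.I * (ξ:ℂ)^3/3) *
        Complex.exp (-Complex.I * (((ξ + η : ℝ)):ℂ)^3 / 3)) * φ (ξ+η) := by ring
    _ = _ := by rw [hexp]
end
end

section
/- There is a constant C > 0 such that the Airy function satisfies: ∫_0^∞ Ai(x+z)² dx ≤ C e^{-z} for all z ≥ 0, and ∫_0^∞ Ai(x+z)² dx ≤ C (1 + z²)^{1/4} for all z ≤ 0. -/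
open MeasureTheory Complex Filter Set
noncomputable section
namespace AiryAux
def F (x : ℝ) (s : ℂ) : ℂ := Complex.exp (Complex.I * (s ^ 3 / 3 + s * (x : ℂ)))
lemma F_diff (x : ℝ) : Differentiable ℂ (F x) := by unfold F; fun_prop
lemma abs_F (x t u : ℝ) :
    ‖F x ((t : ℂ) + (u : ℂ) * Complex.I)‖ =
      Real.exp (-(t ^ 2 * u) + u ^ 3 / 3 - u * x) := by
  rw [F, Complex.norm_exp]
  congr 1
  simp [Complex.mul_re, Complex.mul_im, Complex.div_re, Complex.div_im, pow_succ,
    Complex.normSq]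
  ring

lemma integral_exp_neg_mul (c : ℝ) (hc : c ≠ 0) :
    (∫ u : ℝ in (0:ℝ)..1, Real.exp (-c * u)) = (1 - Real.exp (-c)) / c := by
  have h : ∀ u ∈ Set.uIcc (0:ℝ) 1, HasDerivAt (fun v => -Real.exp (-c * v) / c)
      (Real.exp (-c * u)) u := by
    intro u _
    have h1 : HasDerivAt (fun v : ℝ => -c * v) (-c) u := by
      simpa using (hasDerivAt_id u).const_mul (-c)
    have h2 := (Real.hasDerivAt_exp (-c * u)).comp u h1
    have h3 := (h2.div_const c).neg
    convert h3 using 1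
    · rfl
    · rfl
    · ext v; simp [Function.comp, neg_div]
    · rw [mul_div_assoc, neg_div, div_self hc]
      ring
  rw [intervalIntegral.integral_eq_sub_of_hasDerivAt h]
  · field_simp
    rw [mul_zero, neg_zero, Real.exp_zero]
    ring
  · exact (Real.continuous_exp.comp (by continuity)).intervalIntegrable _ _

/-- Bound on the vertical side integrals. -/
lemma vert (x a : ℝ) (ha : a ≠ 0) :
    ‖∫ u : ℝ in (0:ℝ)..1, F x ((a : ℂ) + (u : ℂ) * Complex.I)‖ ≤
      Real.exp (1/3 + |x|) / a ^ 2 := by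
  have h1 : ‖∫ u : ℝ in (0:ℝ)..1, F x ((a : ℂ) + (u : ℂ) * Complex.I)‖ ≤
      ∫ u in (0:ℝ)..1, ‖F x ((a : ℂ) + (u : ℂ) * Complex.I)‖ :=
    intervalIntegral.norm_integral_le_integral_norm zero_le_one
  have h2 : (∫ u in (0:ℝ)..1, ‖F x ((a : ℂ) + (u : ℂ) * Complex.I)‖) ≤
      ∫ u in (0:ℝ)..1, Real.exp (1/3 + |x|) * Real.exp (-(a^2) * u) := by
    apply intervalIntegral.integral_mono_on zero_le_one
    · apply Continuous.intervalIntegrable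
      exact ((F_diff x).continuous.comp (by continuity)).norm
    · exact (Continuous.intervalIntegrable (by continuity) _ _)
    · intro u hu
      rw [abs_F, ← Real.exp_add]
      apply Real.exp_le_exp.2
      have h3 : u ^ 3 / 3 ≤ 1/3 := by nlinarith [hu.1, hu.2, sq_nonneg u]
      have h4 : -(u * x) ≤ |x| := by
        calc -(u*x) ≤ |u * x| := neg_le_abs _
        _ = |u| * |x| := abs_mul _ _
        _ ≤ 1 * |x| := by
            apply mul_le_mul_of_nonneg_right _ (abs_nonneg x)
            rw [_root_.abs_of_nonneg hu.1]; exact hu.2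
        _ = |x| := one_mul _
      nlinarith
  have ha2 : (0:ℝ) < a ^ 2 := by positivity
  have h5 : (∫ u in (0:ℝ)..1, Real.exp (1/3 + |x|) * Real.exp (-(a^2) * u)) =
      Real.exp (1/3 + |x|) * ((1 - Real.exp (-(a^2))) / a^2) := by
    rw [intervalIntegral.integral_const_mul, integral_exp_neg_mul _ (ne_of_gt ha2)]
  have h6 : Real.exp (1/3 + |x|) * ((1 - Real.exp (-(a^2))) / a^2) ≤
      Real.exp (1/3 + |x|) / a ^ 2 := by
    rw [div_eq_mul_inv (Real.exp _)]
    apply mul_le_mul_of_nonneg_left _ (Real.exp_nonneg _)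
    rw [div_le_iff₀ ha2, inv_mul_cancel₀ (ne_of_gt ha2)]
    have := Real.exp_pos (-(a^2))
    linarith
  linarith

/-- Contour shift from the real axis to the line `Im = 1`. -/
lemma rect (x B : ℝ) :
    (∫ t : ℝ in (-B)..B, F x (t : ℂ)) =
      (∫ t : ℝ in (-B)..B, F x ((t : ℂ) + Complex.I))
      - Complex.I • (∫ u : ℝ in (0:ℝ)..1, F x ((B : ℂ) + (u : ℂ) * Complex.I))
      + Complex.I • (∫ u : ℝ in (0:ℝ)..1, F x ((-B : ℂ) + (u : ℂ) * Complex.I)) := by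
  have h := Complex.integral_boundary_rect_eq_zero_of_differentiableOn (F x)
    ⟨-B, 0⟩ ⟨B, 1⟩ ((F_diff x).differentiableOn)
  simp only [] at h
  have h0 : ∀ t : ℝ, ((t : ℂ) + (0:ℝ) * Complex.I) = (t : ℂ) := by intro t; simp
  have h1 : ∀ t : ℝ, ((t : ℂ) + (1:ℝ) * Complex.I) = (t : ℂ) + Complex.I := by
    intro t; simp
  simp only [h0, h1] at h
  have hB : ∀ u : ℝ, ((B : ℂ) + (u : ℂ) * Complex.I) = ((B:ℝ) : ℂ) + (u:ℂ) * Complex.I := by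
    intro u; norm_num
  push_cast at h ⊢
  linear_combination h


lemma G_cont (x : ℝ) : Continuous (fun t : ℝ => F x ((t:ℂ) + Complex.I)) :=
  (F_diff x).continuous.comp (by continuity)

lemma norm_G (x t : ℝ) : ‖F x ((t:ℂ) + Complex.I)‖ = Real.exp (1/3 - x) * Real.exp (-(1:ℝ) * t^2) := by
  have h := abs_F x t 1
  rw [show ((t:ℂ) + Complex.I) = ((t:ℂ) + (1:ℝ) * Complex.I) by simp, h, ← Real.exp_add]
  ring_nf

lemma G_integrable (x : ℝ) : Integrable (fun t : ℝ => F x ((t:ℂ) + Complex.I)) := by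
  apply Integrable.mono' ((integrable_exp_neg_mul_sq one_pos).const_mul (Real.exp (1/3 - x)))
    (G_cont x).aestronglyMeasurable
  filter_upwards with t
  rw [norm_G]

/-- The key limit: the Airy integral converges to the contour-shifted integral. -/
lemma tendsto_F_integral (x : ℝ) :
    Tendsto (fun B : ℝ => ∫ t : ℝ in (-B)..B, F x (t:ℂ)) atTop
      (nhds (∫ t : ℝ, F x ((t:ℂ) + Complex.I))) := by
  have hmain : Tendsto (fun B : ℝ => ∫ t : ℝ in (-B)..B, F x ((t:ℂ) + Complex.I)) atTop
      (nhds (∫ t : ℝ, F x ((t:ℂ) + Complex.I))) :=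
    intervalIntegral_tendsto_integral (G_integrable x) tendsto_neg_atTop_atBot tendsto_id
  have hb0 : Tendsto (fun B : ℝ => Real.exp (1/3+|x|) / B ^ 2) atTop (nhds 0) := by
    have := ((tendsto_pow_atTop (two_ne_zero)).inv_tendsto_atTop (l := atTop (α := ℝ))).const_mul
      (Real.exp (1/3+|x|))
    simpa [div_eq_mul_inv] using this
  have hv : ∀ s : ℝ → ℝ, (∀ᶠ B in atTop, s B ≠ 0 ∧ B ≤ |s B|) →
      Tendsto (fun B : ℝ => Complex.I • ∫ u : ℝ in (0:ℝ)..1,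
        F x ((s B : ℂ) + (u:ℂ) * Complex.I)) atTop (nhds 0) := by
    intro s hs
    apply squeeze_zero_norm' _ hb0
    filter_upwards [hs, eventually_ge_atTop (1:ℝ)] with B hB hB1
    simp only [norm_smul, Complex.norm_I, one_mul]
    calc ‖∫ u : ℝ in (0:ℝ)..1, F x ((s B : ℂ) + (u:ℂ) * Complex.I)‖ ≤
        Real.exp (1/3 + |x|) / (s B) ^ 2 := vert x (s B) hB.1
      _ ≤ Real.exp (1/3 + |x|) / B ^ 2 := by
          apply div_le_div_of_nonneg_left (Real.exp_nonneg _) (by positivity)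
          calc B ^ 2 ≤ |s B| ^ 2 := by
                apply pow_le_pow_left₀ (by linarith) hB.2
            _ = (s B) ^ 2 := sq_abs _
  have e1 : ∀ᶠ (B:ℝ) in atTop, B ≠ 0 ∧ B ≤ |B| := by
    filter_upwards [eventually_ge_atTop (1:ℝ)] with B hB
    exact ⟨by linarith, le_abs_self B⟩
  have e2 : ∀ᶠ (B:ℝ) in atTop, -B ≠ 0 ∧ B ≤ |(-B)| := by
    filter_upwards [eventually_ge_atTop (1:ℝ)] with B hB
    refine ⟨by intro h; rw [neg_eq_zero] at h; linarith, ?_⟩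
    rw [abs_neg]; exact le_abs_self B
  have h1 := hv (fun B => B) e1
  have h2 := hv (fun B => -B) e2
  have hfin := (hmain.sub h1).add h2
  rw [sub_zero, add_zero] at hfin
  apply hfin.congr
  intro B
  simp only [Complex.ofReal_neg]
  exact (rect x B).symm

/-- Integration-by-parts oscillation bound for the Airy phase on an interval
where the phase derivative does not vanish. -/
lemma vdc (y a b : ℝ) (ha : 0 ≤ a) (hab : a ≤ b) (hne : ∀ t ∈ Icc a b, t^2 + y ≠ 0) :
    |∫ t in a..b, Real.cos (t^3/3 + t*y)| ≤ 2 * (|a^2+y|⁻¹ + |b^2+y|⁻¹) := by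
  have huIcc : Set.uIcc a b = Icc a b := uIcc_of_le hab
  set u : ℝ → ℝ := fun t => (t^2+y)⁻¹ with hu_def
  set u' : ℝ → ℝ := fun t => -(2*t) / (t^2+y)^2 with hu'_def
  set v : ℝ → ℝ := fun t => Real.sin (t^3/3 + t*y) with hv_def
  set v' : ℝ → ℝ := fun t => Real.cos (t^3/3 + t*y) * (t^2+y) with hv'_def
  have hφ : ∀ t : ℝ, HasDerivAt (fun t => t^3/3 + t*y) (t^2+y) t := by
    intro t
    have h1 : HasDerivAt (fun t : ℝ => t^3/3) (t^2) t := by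
      simpa using ((hasDerivAt_pow 3 t).div_const 3)
    have h2 : HasDerivAt (fun t : ℝ => t*y) y t := by
      simpa using (hasDerivAt_id t).mul_const y
    exact h1.add h2
  have hu : ∀ t ∈ Set.uIcc a b, HasDerivAt u (u' t) t := by
    intro t ht
    rw [huIcc] at ht
    have h1 : HasDerivAt (fun t : ℝ => t^2+y) (2*t) t := by
      simpa using ((hasDerivAt_pow 2 t).add_const y)
    exact h1.inv (hne t ht)
  have hv : ∀ t ∈ Set.uIcc a b, HasDerivAt v (v' t) t := by
    intro t _
    exact (Real.hasDerivAt_sin _).comp t (hφ t)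
  have hcont_sq : ContinuousOn (fun t : ℝ => t^2+y) (Icc a b) := by fun_prop
  have hcu' : ContinuousOn u' (Icc a b) := by
    apply ContinuousOn.div (by fun_prop) (by fun_prop)
    intro t ht
    exact pow_ne_zero 2 (hne t ht)
  have hiu' : IntervalIntegrable u' volume a b := by
    rw [intervalIntegrable_iff_integrableOn_Icc_of_le hab]
    exact hcu'.integrableOn_compact isCompact_Icc
  have hiv' : IntervalIntegrable v' volume a b :=
    (Continuous.intervalIntegrable (by fun_prop) _ _)
  have hibp := intervalIntegral.integral_mul_deriv_eq_deriv_mul hu hv hiu' hiv'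
  have hcong : (∫ t in a..b, Real.cos (t^3/3 + t*y)) = ∫ t in a..b, u t * v' t := by
    apply intervalIntegral.integral_congr
    intro t ht
    rw [huIcc] at ht
    simp only [hu_def, hv'_def]
    field_simp [hne t ht]
  -- bound on the remainder term
  have hu'nonpos : ∀ t ∈ Icc a b, u' t ≤ 0 := by
    intro t ht
    apply div_nonpos_of_nonpos_of_nonneg
    · have : 0 ≤ t := le_trans ha ht.1
      linarith
    · positivity
  have hftc : (∫ t in a..b, u' t) = u b - u a :=
    intervalIntegral.integral_eq_sub_of_hasDerivAt hu hiu'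
  have habs : |∫ t in a..b, u' t * v t| ≤ u a - u b := by
    have h1 : |∫ t in a..b, u' t * v t| ≤ ∫ t in a..b, |u' t| * |v t| := by
      have := intervalIntegral.norm_integral_le_integral_norm (f := fun t => u' t * v t)
        (μ := volume) (a := a) (b := b) hab
      simpa [Real.norm_eq_abs] using this
    have h2 : (∫ t in a..b, |u' t| * |v t|) ≤ ∫ t in a..b, -u' t := by
      apply intervalIntegral.integral_mono_on hab
      · rw [intervalIntegrable_iff_integrableOn_Icc_of_le hab]
        apply ContinuousOn.integrableOn_compact isCompact_Icc
        exact (hcu'.abs).mul (by fun_prop)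
      · exact hiu'.neg
      · intro t ht
        calc |u' t| * |v t| ≤ |u' t| * 1 := by
              apply mul_le_mul_of_nonneg_left _ (abs_nonneg _)
              exact Real.abs_sin_le_one _
          _ = -u' t := by rw [mul_one, abs_of_nonpos (hu'nonpos t ht)]
    have h3 : (∫ t in a..b, -u' t) = u a - u b := by
      rw [intervalIntegral.integral_neg, hftc]; ring
    linarith
  have hub : |u b| = |b^2+y|⁻¹ := by rw [hu_def]; exact abs_inv _
  have hua : |u a| = |a^2+y|⁻¹ := by rw [hu_def]; exact abs_inv _
  have hbd : u a - u b ≤ |a^2+y|⁻¹ + |b^2+y|⁻¹ := by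
    rw [← hua, ← hub]
    have := le_abs_self (u a); have := neg_abs_le (u b); linarith
  rw [hcong, hibp]
  have h4 : |u b * v b| ≤ |b^2+y|⁻¹ := by
    rw [abs_mul, ← hub]
    calc |u b| * |v b| ≤ |u b| * 1 :=
        mul_le_mul_of_nonneg_left (Real.abs_sin_le_one _) (abs_nonneg _)
      _ = |u b| := mul_one _
  have h5 : |u a * v a| ≤ |a^2+y|⁻¹ := by
    rw [abs_mul, ← hua]
    calc |u a| * |v a| ≤ |u a| * 1 :=
        mul_le_mul_of_nonneg_left (Real.abs_sin_le_one _) (abs_nonneg _)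
      _ = |u a| := mul_one _
  calc |u b * v b - u a * v a - ∫ t in a..b, u' t * v t| ≤
      |u b * v b| + |u a * v a| + |∫ t in a..b, u' t * v t| := by
        have t1 := abs_sub (u b * v b - u a * v a) (∫ t in a..b, u' t * v t)
        have t2 := abs_sub (u b * v b) (u a * v a)
        linarith
    _ ≤ 2 * (|a^2+y|⁻¹ + |b^2+y|⁻¹) := by linarith

lemma cos_bound (w : ℝ) (hw : 1 ≤ w) (B : ℝ) (hB : Real.sqrt w + 1 ≤ B) :
    |∫ t in (0:ℝ)..B, Real.cos (t^3/3 + t*(-w))| ≤ 10 * w ^ (-(1/4) : ℝ) := by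
  have hw0 : (0:ℝ) < w := lt_of_lt_of_le one_pos hw
  set s : ℝ := Real.sqrt w with hs_def
  set δ : ℝ := w ^ (-(1/4) : ℝ) with hδ_def
  set q : ℝ := w ^ ((1/4) : ℝ) with hq_def
  have hs1 : 1 ≤ s := by
    rw [hs_def, show (1:ℝ) = Real.sqrt 1 by simp]
    exact Real.sqrt_le_sqrt hw
  have hs2 : s ^ 2 = w := Real.sq_sqrt (le_of_lt hw0)
  have hq1 : 1 ≤ q := Real.one_le_rpow hw (by norm_num)
  have hq0 : 0 < q := lt_of_lt_of_le one_pos hq1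
  have hqδ : q⁻¹ = δ := by
    rw [hδ_def, hq_def, ← Real.rpow_neg (le_of_lt hw0)]
  have hδ0 : 0 < δ := Real.rpow_pos_of_pos hw0 _
  have hδ1 : δ ≤ 1 := Real.rpow_le_one_of_one_le_of_nonpos hw (by norm_num)
  have hδ2 : δ^2 ≤ 1 := by nlinarith
  have hδsq : (0:ℝ) ≤ δ^2 := sq_nonneg δ
  have hδs : δ ≤ s := le_trans hδ1 hs1
  have hsδq : s * δ = q := by
    rw [hs_def, Real.sqrt_eq_rpow, hδ_def, hq_def, ← Real.rpow_add hw0]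
    norm_num
  have hwq : q ≤ w := by
    calc q = w ^ ((1/4):ℝ) := rfl
      _ ≤ w ^ (1:ℝ) := Real.rpow_le_rpow_of_exponent_le hw (by norm_num)
      _ = w := Real.rpow_one w
  have hsq : q ≤ s := by
    rw [hs_def, Real.sqrt_eq_rpow, hq_def]
    exact Real.rpow_le_rpow_of_exponent_le hw (by norm_num)
  -- key algebraic identities
  have key1 : (s-δ)^2 + -w = -(2*q - δ^2) := by rw [← hsδq, ← hs2]; ring
  have key3 : (s+δ)^2 + -w = 2*q + δ^2 := by rw [← hsδq, ← hs2]; ring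
  -- interval endpoints
  have h01 : (0:ℝ) ≤ s - δ := by linarith
  have h12 : s - δ ≤ s + δ := by linarith
  have h23 : s + δ ≤ B := by linarith
  have hcont : Continuous (fun t : ℝ => Real.cos (t^3/3 + t*(-w))) := by fun_prop
  have hii : ∀ p r : ℝ, IntervalIntegrable (fun t : ℝ => Real.cos (t^3/3 + t*(-w))) volume p r :=
    fun p r => hcont.intervalIntegrable p r
  -- piece 1
  have hI1 : |∫ t in (0:ℝ)..(s-δ), Real.cos (t^3/3 + t*(-w))| ≤ 4 * δ := by
    have hne : ∀ t ∈ Icc (0:ℝ) (s-δ), t^2 + (-w) ≠ 0 := by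
      intro t ht
      have h1 : t ^ 2 ≤ (s - δ)^2 := pow_le_pow_left₀ ht.1 ht.2 2
      intro hcontra; linarith
    have hmain := vdc (-w) 0 (s-δ) le_rfl h01 hne
    have e1 : |(0:ℝ)^2 + -w| = w := by
      rw [show (0:ℝ)^2 + -w = -w by ring, abs_neg, abs_of_pos hw0]
    have e2 : |(s-δ)^2 + -w| = 2*q - δ^2 := by
      rw [key1, abs_neg, abs_of_pos (by linarith)]
    rw [e1, e2] at hmain
    have b1 : w⁻¹ ≤ δ := by
      rw [← hqδ]; exact inv_anti₀ hq0 hwq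
    have b2 : (2*q - δ^2)⁻¹ ≤ δ := by
      have hq2 : q⁻¹^2 ≤ 1 := by rw [hqδ]; exact hδ2
      rw [← hqδ]
      exact inv_anti₀ hq0 (by linarith)
    linarith
  -- piece 2
  have hI2 : |∫ t in (s-δ)..(s+δ), Real.cos (t^3/3 + t*(-w))| ≤ 2 * δ := by
    have hbd := intervalIntegral.norm_integral_le_of_norm_le_const
      (C := 1) (f := fun t : ℝ => Real.cos (t^3/3 + t*(-w))) (a := s-δ) (b := s+δ)
      (fun t _ => by rw [Real.norm_eq_abs]; exact Real.abs_cos_le_one _)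
    rw [Real.norm_eq_abs] at hbd
    calc |∫ t in (s-δ)..(s+δ), Real.cos (t^3/3 + t*(-w))| ≤ 1 * |(s+δ) - (s-δ)| := hbd
      _ = 2 * δ := by rw [one_mul, show (s+δ) - (s-δ) = 2*δ by ring, abs_of_pos (by linarith)]
  -- piece 3
  have hI3 : |∫ t in (s+δ)..B, Real.cos (t^3/3 + t*(-w))| ≤ 4 * δ := by
    have hne : ∀ t ∈ Icc (s+δ) B, t^2 + (-w) ≠ 0 := by
      intro t ht
      have h1 : (s+δ)^2 ≤ t ^ 2 := pow_le_pow_left₀ (by linarith) ht.1 2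
      intro hcontra; linarith [hδsq, hq0]
    have hmain := vdc (-w) (s+δ) B (by linarith) h23 hne
    have hBsq : (s+1)^2 ≤ B^2 := pow_le_pow_left₀ (by linarith) hB 2
    have hB2 : 2*s + 1 ≤ B^2 + -w := by nlinarith
    have e1 : |(s+δ)^2 + -w| = 2*q + δ^2 := by
      rw [key3, abs_of_pos (by linarith)]
    have e2 : |B^2 + -w| = B^2 - w := by
      rw [abs_of_pos (by linarith)]; ring
    rw [e1, e2] at hmain
    have b1 : (2*q + δ^2)⁻¹ ≤ δ := by
      rw [← hqδ]
      exact inv_anti₀ hq0 (by linarith [sq_nonneg q⁻¹])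
    have b2 : (B^2 - w)⁻¹ ≤ δ := by
      rw [← hqδ]
      apply inv_anti₀ hq0
      linarith
    linarith
  -- combine
  have hsplit : (∫ t in (0:ℝ)..B, Real.cos (t^3/3 + t*(-w))) =
      (∫ t in (0:ℝ)..(s-δ), Real.cos (t^3/3 + t*(-w)))
      + (∫ t in (s-δ)..(s+δ), Real.cos (t^3/3 + t*(-w)))
      + (∫ t in (s+δ)..B, Real.cos (t^3/3 + t*(-w))) := by
    rw [intervalIntegral.integral_add_adjacent_intervals (hii _ _) (hii _ _),
      intervalIntegral.integral_add_adjacent_intervals (hii _ _) (hii _ _)]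
  rw [hsplit]
  have t1 := abs_add_le ((∫ t in (0:ℝ)..(s-δ), Real.cos (t^3/3 + t*(-w)))
    + (∫ t in (s-δ)..(s+δ), Real.cos (t^3/3 + t*(-w))))
    (∫ t in (s+δ)..B, Real.cos (t^3/3 + t*(-w)))
  have t2 := abs_add_le (∫ t in (0:ℝ)..(s-δ), Real.cos (t^3/3 + t*(-w)))
    (∫ t in (s-δ)..(s+δ), Real.cos (t^3/3 + t*(-w)))
  linarith

lemma norm_shift (x : ℝ) :
    ‖∫ t : ℝ, F x ((t:ℂ) + Complex.I)‖ ≤ Real.exp (1/3 - x) * Real.sqrt Real.pi := by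
  calc ‖∫ t : ℝ, F x ((t:ℂ) + Complex.I)‖ ≤ ∫ t : ℝ, ‖F x ((t:ℂ) + Complex.I)‖ :=
      norm_integral_le_integral_norm _
    _ = ∫ t : ℝ, Real.exp (1/3 - x) * Real.exp (-(1:ℝ) * t^2) := by
        congr 1; funext t; exact norm_G x t
    _ = Real.exp (1/3 - x) * ∫ t : ℝ, Real.exp (-(1:ℝ) * t^2) := integral_const_mul _ _
    _ = Real.exp (1/3 - x) * Real.sqrt (Real.pi / 1) := by rw [integral_gaussian]
    _ = Real.exp (1/3 - x) * Real.sqrt Real.pi := by norm_num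

lemma cont_shift : Continuous (fun x : ℝ => ∫ t : ℝ, F x ((t:ℂ) + Complex.I)) := by
  rw [continuous_iff_continuousAt]
  intro x₀
  apply continuousAt_of_dominated (bound := fun t => Real.exp (1/3 - (x₀ - 1)) * Real.exp (-(1:ℝ) * t^2))
  · filter_upwards with x
    exact (G_cont x).aestronglyMeasurable
  · filter_upwards [eventually_gt_nhds (by linarith : x₀ - 1 < x₀)] with x hx
    filter_upwards with t
    rw [norm_G]
    apply mul_le_mul_of_nonneg_right _ (Real.exp_nonneg _)
    exact Real.exp_le_exp.2 (by linarith)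
  · exact (integrable_exp_neg_mul_sq one_pos).const_mul _
  · filter_upwards with t
    apply Continuous.continuousAt
    apply Complex.continuous_exp.comp
    continuity

lemma F_symm (x B : ℝ) :
    (∫ t : ℝ in (-B)..B, F x (t:ℂ)) =
      2 * ((↑(∫ t in (0:ℝ)..B, Real.cos (t^3/3 + t*x)) : ℂ)) := by
  have hcont : Continuous (fun t : ℝ => F x (t:ℂ)) :=
    (F_diff x).continuous.comp (by continuity)
  have hInt : ∀ p r : ℝ, IntervalIntegrable (fun t : ℝ => F x (t:ℂ)) volume p r :=
    fun p r => hcont.intervalIntegrable p r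
  have h1 : (∫ t : ℝ in (-B)..B, F x (t:ℂ)) =
      (∫ t in (-B)..(0:ℝ), F x (t:ℂ)) + ∫ t in (0:ℝ)..B, F x (t:ℂ) :=
    (intervalIntegral.integral_add_adjacent_intervals (hInt _ _) (hInt _ _)).symm
  have h2 : (∫ t in (-B)..(0:ℝ), F x (t:ℂ)) = ∫ t in (0:ℝ)..B, F x ((-t : ℝ):ℂ) := by
    rw [intervalIntegral.integral_comp_neg (fun t:ℝ => F x (t:ℂ))]
    norm_num
  have h3 : ∀ t : ℝ, F x ((-t : ℝ):ℂ) + F x (t:ℂ) =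
      2 * ((Real.cos (t^3/3 + t*x) : ℝ) : ℂ) := by
    intro t
    set θ : ℂ := ((t^3/3 + t*x : ℝ) : ℂ) with hθ
    have e1 : Complex.I * (((-t : ℝ):ℂ) ^ 3 / 3 + ((-t : ℝ):ℂ) * (x:ℂ)) = -θ * Complex.I := by
      rw [hθ]; push_cast; ring
    have e2 : Complex.I * (((t : ℝ):ℂ) ^ 3 / 3 + ((t : ℝ):ℂ) * (x:ℂ)) = θ * Complex.I := by
      rw [hθ]; push_cast; ring
    rw [F, F, e1, e2, Complex.exp_mul_I, Complex.exp_mul_I, Complex.cos_neg, Complex.sin_neg,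
      Complex.ofReal_cos]
    ring
  have h4 : (∫ t in (0:ℝ)..B, F x ((-t : ℝ):ℂ)) + (∫ t in (0:ℝ)..B, F x (t:ℂ)) =
      ∫ t in (0:ℝ)..B, (F x ((-t : ℝ):ℂ) + F x (t:ℂ)) := by
    rw [intervalIntegral.integral_add]
    · exact (hcont.comp continuous_neg).intervalIntegrable _ _
    · exact hInt _ _
  rw [h1, h2, h4]
  have h5 : (∫ t in (0:ℝ)..B, (F x ((-t : ℝ):ℂ) + F x (t:ℂ))) =
      ∫ t in (0:ℝ)..B, 2 * ((Real.cos (t^3/3 + t*x) : ℝ) : ℂ) := by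
    congr 1; funext t; exact h3 t
  rw [h5, intervalIntegral.integral_const_mul, intervalIntegral.integral_ofReal]


lemma integral_inv_sqrt (z : ℝ) (hz : z ≤ -1) :
    (∫ x in (0:ℝ)..(-1-z), (-(x+z)) ^ (-(1/2):ℝ)) = 2*Real.sqrt (-z) - 2 := by
  have hc0 : (0:ℝ) ≤ -1-z := by linarith
  have hpos : ∀ x ∈ Set.uIcc (0:ℝ) (-1-z), (1:ℝ) ≤ -(x+z) := by
    intro x hx
    rw [uIcc_of_le hc0] at hx
    have := hx.2
    linarith
  have hftc : ∀ x ∈ Set.uIcc (0:ℝ) (-1-z),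
      HasDerivAt (fun x => -2 * Real.sqrt (-(x+z))) ((-(x+z)) ^ (-(1/2):ℝ)) x := by
    intro x hx
    have h1 : (1:ℝ) ≤ -(x+z) := hpos x hx
    have h0 : (0:ℝ) < -(x+z) := lt_of_lt_of_le one_pos h1
    have hinner : HasDerivAt (fun x : ℝ => -(x+z)) (-1) x := by
      exact ((hasDerivAt_id x).add_const z).neg
    have hsq := (Real.hasDerivAt_sqrt (ne_of_gt h0)).comp x hinner
    have hfinal := hsq.const_mul (-2 : ℝ)
    convert hfinal using 1
    · rfl
    · rfl
    · rfl
    rw [Real.rpow_neg (le_of_lt h0), ← Real.sqrt_eq_rpow]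
    have hs0 : 0 < Real.sqrt (-(x+z)) := Real.sqrt_pos.2 h0
    have hs1 : Real.sqrt (-z + -x) ≠ 0 := by
      rw [show -z + -x = -(x+z) by ring]; exact ne_of_gt hs0
    field_simp
  rw [intervalIntegral.integral_eq_sub_of_hasDerivAt hftc]
  · have h1 : -(-1-z+z) = (1:ℝ) := by ring
    have h2 : -((0:ℝ)+z) = -z := by ring
    rw [h1, h2, Real.sqrt_one]
    ring
  · apply ContinuousOn.intervalIntegrable
    apply ContinuousOn.rpow_const
    · fun_prop
    · intro x hx
      exact Or.inl (ne_of_gt (lt_of_lt_of_le one_pos (hpos x hx)))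

end AiryAux

open AiryAux in
/-- There is a constant `C > 0` such that the Airy function
(characterized by `Ai(x) = lim_{B→∞} (1/(2π)) ∫_{-B}^{B} e^{i(t³/3 + tx)} dt`)
satisfies `∫_0^∞ Ai(x+z)² dx ≤ C e^{-z}` for all `z ≥ 0` and
`∫_0^∞ Ai(x+z)² dx ≤ C (1 + z²)^{1/4}` for all `z ≤ 0` (in particular all these
integrals converge). -/
theorem airy_square_integral_bounds
    (Ai : ℝ → ℝ)
    (hAi : ∀ x : ℝ, Tendsto
      (fun B : ℝ => (1 / (2 * Real.pi) : ℂ) *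
        ∫ t in (-B)..B, Complex.exp (Complex.I * ((t : ℂ) ^ 3 / 3 + (t : ℂ) * (x : ℂ))))
      atTop (nhds ((Ai x : ℝ) : ℂ))) :
    ∃ C : ℝ, 0 < C ∧
      (∀ z : ℝ, IntegrableOn (fun x : ℝ => (Ai (x + z)) ^ 2) (Ioi 0) volume) ∧
      (∀ z : ℝ, 0 ≤ z →
        ∫ x in Ioi (0 : ℝ), (Ai (x + z)) ^ 2 ≤ C * Real.exp (-z)) ∧
      (∀ z : ℝ, z ≤ 0 →
        ∫ x in Ioi (0 : ℝ), (Ai (x + z)) ^ 2 ≤ C * (1 + z ^ 2) ^ ((1 : ℝ) / 4)) := by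
  have hπ : 0 < Real.pi := Real.pi_pos
  set K : ℝ := Real.exp (1/3) * Real.sqrt Real.pi / (2*Real.pi) with hK_def
  set M : ℝ := 20 / (2*Real.pi) with hM_def
  have hK0 : 0 < K :=
    div_pos (mul_pos (Real.exp_pos _) (Real.sqrt_pos.2 hπ)) (by linarith)
  have hM0 : 0 < M := div_pos (by norm_num) (by linarith)
  have hAiF : ∀ x : ℝ, Tendsto (fun B : ℝ => (1 / (2 * Real.pi) : ℂ) *
      ∫ t in (-B)..B, F x (t:ℂ)) atTop (nhds ((Ai x : ℝ) : ℂ)) := hAi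
  have hnormc : ‖(1 / (2 * Real.pi) : ℂ)‖ = 1/(2*Real.pi) := by
    rw [norm_div, norm_one, norm_mul, Complex.norm_real, Real.norm_eq_abs,
      _root_.abs_of_pos hπ]
    norm_num
  have hrep : ∀ x : ℝ, ((Ai x : ℝ) : ℂ) =
      (1 / (2 * Real.pi) : ℂ) * ∫ t : ℝ, F x ((t:ℂ) + Complex.I) := fun x =>
    tendsto_nhds_unique (hAiF x) ((tendsto_F_integral x).const_mul _)
  have habs : ∀ u : ℝ, |Ai u| = ‖((Ai u : ℝ):ℂ)‖ := by
    intro u; rw [Complex.norm_real, Real.norm_eq_abs]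
  -- exponential pointwise bound
  have hKbound : ∀ u : ℝ, |Ai u| ≤ K * Real.exp (-u) := by
    intro u
    rw [habs u, hrep u, norm_mul, hnormc]
    calc 1/(2*Real.pi) * ‖∫ t : ℝ, F u ((t:ℂ) + Complex.I)‖ ≤
        1/(2*Real.pi) * (Real.exp (1/3 - u) * Real.sqrt Real.pi) :=
          mul_le_mul_of_nonneg_left (norm_shift u) (by positivity)
      _ = K * Real.exp (-u) := by
          rw [hK_def, show (1/3 - u : ℝ) = 1/3 + -u by ring, Real.exp_add]
          ring
  -- negative-side pointwise bound
  have hMbound : ∀ w : ℝ, 1 ≤ w → |Ai (-w)| ≤ M * w ^ (-(1/4):ℝ) := by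
    intro w hw
    rw [habs]
    apply le_of_tendsto (hAiF (-w)).norm
    filter_upwards [eventually_ge_atTop (Real.sqrt w + 1)] with B hB
    have h2 := cos_bound w hw B hB
    rw [F_symm (-w) B, norm_mul, hnormc, norm_mul, Complex.norm_real, Real.norm_eq_abs]
    have hn2 : ‖(2:ℂ)‖ = 2 := by norm_num
    rw [hn2]
    calc 1/(2*Real.pi) * (2 * |∫ t in (0:ℝ)..B, Real.cos (t^3/3 + t*(-w))|) ≤
        1/(2*Real.pi) * (2 * (10 * w ^ (-(1/4):ℝ))) := by
          apply mul_le_mul_of_nonneg_left _ (by positivity)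
          apply mul_le_mul_of_nonneg_left h2 (by norm_num)
      _ = M * w ^ (-(1/4):ℝ) := by rw [hM_def]; ring
  -- measurability
  have hAim : Measurable Ai := by
    have hfun : Ai = fun x =>
        ((1 / (2 * Real.pi) : ℂ) * ∫ t : ℝ, F x ((t:ℂ) + Complex.I)).re := by
      funext x; rw [← hrep x, Complex.ofReal_re]
    rw [hfun]
    exact (Complex.continuous_re.comp (continuous_const.mul cont_shift)).measurable
  have hsqm : ∀ z : ℝ, Measurable (fun x : ℝ => (Ai (x+z))^2) := fun z =>
    (hAim.comp (measurable_add_const z)).pow measurable_const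
  have hexpint : ∀ c : ℝ, IntegrableOn (fun x : ℝ => Real.exp (-x)) (Ioi c) volume := by
    intro c
    have := exp_neg_integrableOn_Ioi c one_pos
    simpa using this
  -- master pointwise bound
  have key : ∀ z x : ℝ, -1 ≤ x + z →
      (Ai (x+z))^2 ≤ (K^2 * Real.exp 1 * Real.exp (-z)) * Real.exp (-x) := by
    intro z x hx
    have h1 : (Ai (x+z))^2 ≤ (K * Real.exp (-(x+z)))^2 := by
      rw [← _root_.sq_abs]
      exact pow_le_pow_left₀ (abs_nonneg _) (hKbound _) 2
    have h2 : Real.exp (-(x+z)) = Real.exp (-x) * Real.exp (-z) := by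
      rw [← Real.exp_add]; ring_nf
    have h3 : Real.exp (-(x+z)) ≤ Real.exp 1 := Real.exp_le_exp.2 (by linarith)
    have h4 := Real.exp_pos (-(x+z))
    calc (Ai (x+z))^2 ≤ (K * Real.exp (-(x+z)))^2 := h1
      _ = K^2 * (Real.exp (-(x+z)) * Real.exp (-(x+z))) := by ring
      _ ≤ K^2 * (Real.exp 1 * Real.exp (-(x+z))) := by
          apply mul_le_mul_of_nonneg_left _ (by positivity)
          exact mul_le_mul_of_nonneg_right h3 (le_of_lt h4)
      _ = (K^2 * Real.exp 1 * Real.exp (-z)) * Real.exp (-x) := by rw [h2]; ring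
  have hboundint : ∀ (z c : ℝ), IntegrableOn
      (fun x : ℝ => (K^2 * Real.exp 1 * Real.exp (-z)) * Real.exp (-x)) (Ioi c) volume :=
    fun z c => (hexpint c).const_mul _
  -- integrability
  have hint : ∀ z : ℝ, IntegrableOn (fun x : ℝ => (Ai (x + z)) ^ 2) (Ioi 0) volume := by
    intro z
    by_cases hz : -1 ≤ z
    · apply Integrable.mono' (hboundint z 0) ((hsqm z).aestronglyMeasurable)
      rw [ae_restrict_iff' measurableSet_Ioi]
      filter_upwards with x hx
      rw [Real.norm_eq_abs, _root_.abs_of_nonneg (sq_nonneg _)]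
      exact key z x (by simp at hx; linarith)
    · push_neg at hz
      -- split at c := -1 - z
      have hc0 : (0:ℝ) ≤ -1 - z := by linarith
      rw [← Ioc_union_Ioi_eq_Ioi hc0]
      apply IntegrableOn.union
      · -- bounded on compact-ish piece via M bound
        have hcb : ContinuousOn (fun x:ℝ => M^2 * (-(x+z)) ^ (-(1/2):ℝ)) (Icc 0 (-1-z)) := by
          apply ContinuousOn.mul continuousOn_const
          apply ContinuousOn.rpow_const (by fun_prop)
          intro x hx
          have : (1:ℝ) ≤ -(x+z) := by
            have := hx.2
            simp only [mem_Icc] at hx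
            linarith [hx.2]
          exact Or.inl (by linarith)
        apply Integrable.mono'
          ((hcb.integrableOn_compact isCompact_Icc).mono_set Ioc_subset_Icc_self)
          ((hsqm z).aestronglyMeasurable)
        rw [ae_restrict_iff' measurableSet_Ioc]
        filter_upwards with x hx
        rw [Real.norm_eq_abs, _root_.abs_of_nonneg (sq_nonneg _)]
        have hw1 : (1:ℝ) ≤ -(x+z) := by
          simp only [mem_Ioc] at hx
          linarith [hx.2]
        have hw0 : (0:ℝ) < -(x+z) := lt_of_lt_of_le one_pos hw1
        have h1 : |Ai (x+z)| ≤ M * (-(x+z)) ^ (-(1/4):ℝ) := by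
          have := hMbound (-(x+z)) hw1
          simpa using this
        calc (Ai (x+z))^2 = |Ai (x+z)|^2 := (_root_.sq_abs _).symm
          _ ≤ (M * (-(x+z)) ^ (-(1/4):ℝ))^2 := pow_le_pow_left₀ (abs_nonneg _) h1 2
          _ = M^2 * ((-(x+z)) ^ (-(1/4):ℝ))^2 := by ring
          _ = M^2 * (-(x+z)) ^ (-(1/2):ℝ) := by
              congr 1
              rw [← Real.rpow_natCast ((-(x+z)) ^ (-(1/4):ℝ)) 2,
                ← Real.rpow_mul (le_of_lt hw0)]
              norm_num
      · apply Integrable.mono' (hboundint z (-1-z)) ((hsqm z).aestronglyMeasurable)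
        rw [ae_restrict_iff' measurableSet_Ioi]
        filter_upwards with x hx
        rw [Real.norm_eq_abs, _root_.abs_of_nonneg (sq_nonneg _)]
        apply key z x
        simp only [mem_Ioi] at hx
        linarith
  -- the candidate constant
  refine ⟨K^2 * Real.exp 1 * Real.exp 1 + K^2 + 2*M^2 + 1, by positivity, hint, ?_, ?_⟩
  · -- z ≥ 0
    intro z hz
    have hmono := setIntegral_mono_on (hint z) (hboundint z 0) measurableSet_Ioi
      (fun x hx => key z x (by simp only [mem_Ioi] at hx; linarith))
    rw [integral_const_mul, integral_exp_neg_Ioi_zero, mul_one] at hmono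
    have hez : Real.exp (-z) ≤ 1 := Real.exp_le_one_iff.2 (by linarith)
    have he1 : Real.exp 1 * Real.exp (-z) ≤ Real.exp 1 * 1 :=
      mul_le_mul_of_nonneg_left hez (Real.exp_pos 1).le
    have hKe : K^2 * Real.exp 1 * Real.exp (-z) ≤ K^2 * Real.exp 1 := by nlinarith
    calc (∫ x in Ioi (0:ℝ), (Ai (x+z))^2) ≤ K^2 * Real.exp 1 * Real.exp (-z) := hmono
      _ ≤ (K^2 * Real.exp 1 * Real.exp 1 + K^2 + 2*M^2 + 1) * Real.exp (-z) := by
          apply mul_le_mul_of_nonneg_right _ (Real.exp_pos _).le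
          have hee : (1:ℝ) ≤ Real.exp 1 := Real.one_le_exp zero_le_one
          have h1 : K^2*Real.exp 1 * 1 ≤ K^2*Real.exp 1 * Real.exp 1 :=
            mul_le_mul_of_nonneg_left hee (by positivity)
          linarith [h1, sq_nonneg M, sq_nonneg K]
  · -- z ≤ 0
    intro z hz
    have hP1 : (1:ℝ) ≤ (1 + z^2) ^ ((1:ℝ)/4) := Real.one_le_rpow (by nlinarith) (by norm_num)
    have hP0 : (0:ℝ) < (1 + z^2) ^ ((1:ℝ)/4) := lt_of_lt_of_le one_pos hP1
    by_cases hz1 : -1 ≤ z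
    · -- mild case
      have hmono := setIntegral_mono_on (hint z) (hboundint z 0) measurableSet_Ioi
        (fun x hx => key z x (by simp only [mem_Ioi] at hx; linarith))
      rw [integral_const_mul, integral_exp_neg_Ioi_zero, mul_one] at hmono
      have hez : Real.exp (-z) ≤ Real.exp 1 := Real.exp_le_exp.2 (by linarith)
      calc (∫ x in Ioi (0:ℝ), (Ai (x+z))^2) ≤ K^2 * Real.exp 1 * Real.exp (-z) := hmono
        _ ≤ K^2 * Real.exp 1 * Real.exp 1 :=
            mul_le_mul_of_nonneg_left hez (by positivity)
        _ = (K^2 * Real.exp 1 * Real.exp 1) * 1 := (mul_one _).symm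
        _ ≤ (K^2 * Real.exp 1 * Real.exp 1 + K^2 + 2*M^2 + 1) * ((1 + z^2) ^ ((1:ℝ)/4)) := by
            apply mul_le_mul _ hP1 zero_le_one _
            · nlinarith [sq_nonneg K, sq_nonneg M]
            · positivity
    · push_neg at hz1
      have hzle : z ≤ -1 := le_of_lt hz1
      have hc0 : (0:ℝ) ≤ -1 - z := by linarith
      have hIntc : IntegrableOn (fun x : ℝ => (Ai (x + z)) ^ 2) (Ioc 0 (-1-z)) volume :=
        (hint z).mono_set Ioc_subset_Ioi_self
      have hIntr : IntegrableOn (fun x : ℝ => (Ai (x + z)) ^ 2) (Ioi (-1-z)) volume :=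
        (hint z).mono_set (Ioi_subset_Ioi hc0)
      have hsplit : (∫ x in Ioi (0:ℝ), (Ai (x+z))^2) =
          (∫ x in Ioc (0:ℝ) (-1-z), (Ai (x+z))^2) + ∫ x in Ioi (-1-z), (Ai (x+z))^2 := by
        rw [← Ioc_union_Ioi_eq_Ioi hc0]
        exact setIntegral_union (Ioc_disjoint_Ioi le_rfl) measurableSet_Ioi hIntc hIntr
      -- far piece
      have hfar : (∫ x in Ioi (-1-z), (Ai (x+z))^2) ≤ K^2 * Real.exp 1 * Real.exp 1 := by
        have hmono := setIntegral_mono_on hIntr (hboundint z (-1-z)) measurableSet_Ioi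
          (fun x hx => key z x (by simp only [mem_Ioi] at hx; linarith))
        rw [integral_const_mul, integral_exp_neg_Ioi] at hmono
        have he : Real.exp (-z) * Real.exp (-(-1-z)) = Real.exp 1 := by
          rw [← Real.exp_add]; norm_num
        calc (∫ x in Ioi (-1-z), (Ai (x+z))^2) ≤
            K^2 * Real.exp 1 * Real.exp (-z) * Real.exp (-(-1-z)) := hmono
          _ = K^2 * Real.exp 1 * (Real.exp (-z) * Real.exp (-(-1-z))) := by ring
          _ = K^2 * Real.exp 1 * Real.exp 1 := by rw [he]
      -- near piece
      have hnearb : IntegrableOn (fun x:ℝ => M^2 * (-(x+z)) ^ (-(1/2):ℝ))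
          (Ioc 0 (-1-z)) volume := by
        have hcb : ContinuousOn (fun x:ℝ => M^2 * (-(x+z)) ^ (-(1/2):ℝ)) (Icc 0 (-1-z)) := by
          apply ContinuousOn.mul continuousOn_const
          apply ContinuousOn.rpow_const (by fun_prop)
          intro x hx
          simp only [mem_Icc] at hx
          exact Or.inl (by linarith [hx.2])
        exact (hcb.integrableOn_compact isCompact_Icc).mono_set Ioc_subset_Icc_self
      have hnear : (∫ x in Ioc (0:ℝ) (-1-z), (Ai (x+z))^2) ≤
          M^2 * (2*Real.sqrt (-z) - 2) := by
        have hmono := setIntegral_mono_on hIntc hnearb measurableSet_Ioc ?_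
        · calc (∫ x in Ioc (0:ℝ) (-1-z), (Ai (x+z))^2) ≤
              ∫ x in Ioc (0:ℝ) (-1-z), M^2 * (-(x+z)) ^ (-(1/2):ℝ) := hmono
            _ = M^2 * ∫ x in Ioc (0:ℝ) (-1-z), (-(x+z)) ^ (-(1/2):ℝ) := integral_const_mul _ _
            _ = M^2 * (2*Real.sqrt (-z) - 2) := by
                rw [← intervalIntegral.integral_of_le hc0, integral_inv_sqrt z hzle]
        · intro x hx
          simp only [mem_Ioc] at hx
          have hw1 : (1:ℝ) ≤ -(x+z) := by linarith [hx.2]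
          have hw0 : (0:ℝ) < -(x+z) := lt_of_lt_of_le one_pos hw1
          have h1 : |Ai (x+z)| ≤ M * (-(x+z)) ^ (-(1/4):ℝ) := by
            have := hMbound (-(x+z)) hw1
            simpa using this
          calc (Ai (x+z))^2 = |Ai (x+z)|^2 := (_root_.sq_abs _).symm
            _ ≤ (M * (-(x+z)) ^ (-(1/4):ℝ))^2 := pow_le_pow_left₀ (abs_nonneg _) h1 2
            _ = M^2 * ((-(x+z)) ^ (-(1/4):ℝ))^2 := by ring
            _ = M^2 * (-(x+z)) ^ (-(1/2):ℝ) := by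
                congr 1
                rw [← Real.rpow_natCast ((-(x+z)) ^ (-(1/4):ℝ)) 2,
                  ← Real.rpow_mul (le_of_lt hw0)]
                norm_num
      -- √(-z) ≤ (1+z²)^{1/4}
      have hzq : Real.sqrt (-z) ≤ (1+z^2) ^ ((1:ℝ)/4) := by
        have h14 : (1+z^2) ^ ((1:ℝ)/4) = Real.sqrt (Real.sqrt (1+z^2)) := by
          rw [Real.sqrt_eq_rpow, Real.sqrt_eq_rpow,
            ← Real.rpow_mul (show (0:ℝ) ≤ 1+z^2 by positivity)]
          norm_num
        rw [h14]
        apply Real.sqrt_le_sqrt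
        nlinarith [Real.sq_sqrt (show (0:ℝ) ≤ 1+z^2 by positivity),
          Real.sqrt_nonneg (1+z^2)]
      rw [hsplit]
      have hM2 : (0:ℝ) ≤ M^2 := sq_nonneg M
      have hsq0 : (0:ℝ) ≤ Real.sqrt (-z) := Real.sqrt_nonneg _
      calc (∫ x in Ioc (0:ℝ) (-1-z), (Ai (x+z))^2) + (∫ x in Ioi (-1-z), (Ai (x+z))^2) ≤
          M^2 * (2*Real.sqrt (-z) - 2) + K^2 * Real.exp 1 * Real.exp 1 := by
            linarith [hnear, hfar]
        _ ≤ 2*M^2 * ((1+z^2) ^ ((1:ℝ)/4)) + K^2 * Real.exp 1 * Real.exp 1 * ((1+z^2) ^ ((1:ℝ)/4)) := by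
            have e1 : M^2 * (2*Real.sqrt (-z) - 2) ≤ 2*M^2 * ((1+z^2) ^ ((1:ℝ)/4)) := by
              have h' := mul_le_mul_of_nonneg_left hzq hM2
              nlinarith [h', hM2]
            have e2 : K^2 * Real.exp 1 * Real.exp 1 ≤
                K^2 * Real.exp 1 * Real.exp 1 * ((1+z^2) ^ ((1:ℝ)/4)) := by
              have h := mul_le_mul_of_nonneg_left hP1
                (show (0:ℝ) ≤ K^2*Real.exp 1*Real.exp 1 by positivity)
              linarith [h]
            linarith
        _ ≤ (K^2 * Real.exp 1 * Real.exp 1 + K^2 + 2*M^2 + 1) * ((1 + z^2) ^ ((1:ℝ)/4)) := by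
            have hle : 2*M^2 + K^2*Real.exp 1*Real.exp 1 ≤
                K^2*Real.exp 1*Real.exp 1 + K^2 + 2*M^2 + 1 := by
              linarith [sq_nonneg K]
            have h := mul_le_mul_of_nonneg_right hle hP0.le
            linarith [h]
end
end

section
/- Let N ≥ 1 and let φ_0, …, φ_{N−1} : ℝ → ℝ be an orthonormal family in L²(ℝ). Define K_N(x,y) = Σ_{i=0}^{N−1} φ_i(x) φ_i(y) and P_N(x_1,…,x_N) = (1/N!) det( K_N(x_i, x_j) )_{i,j=1}^N. Then for every 1 ≤ n ≤ N and all x_1, …, x_n ∈ ℝ, (N!/(N−n)!) ∫_{ℝ^{N−n}} P_N(x_1,…,x_N) dx_{n+1} ⋯ dx_N = det( K_N(x_i, x_j) )_{i,j=1}^n. -/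
open MeasureTheory Complex Filter Set

noncomputable section

section AuxLemmas

/-- A permutation of a sum type fixing the right component pointwise is `sumCongr π 1`. -/
private lemma perm_fix_inr_eq_sumCongr {A B : Type*} (ρ : Equiv.Perm (A ⊕ B))
    (h : ∀ b, ρ (Sum.inr b) = Sum.inr b) :
    ∃ π : Equiv.Perm A, ρ = Equiv.sumCongr π (Equiv.refl B) := by
  have hinv : ∀ b, ρ.symm (Sum.inr b) = Sum.inr b := by
    intro b
    apply ρ.injective
    rw [Equiv.apply_symm_apply, h]
  have hl : ∀ a, ∃ a', ρ (Sum.inl a) = Sum.inl a' := by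
    intro a
    rcases h' : ρ (Sum.inl a) with a' | b
    · exact ⟨a', rfl⟩
    · exact absurd (ρ.injective (h'.trans (h b).symm)) (by simp)
  have hl' : ∀ a, ∃ a', ρ.symm (Sum.inl a) = Sum.inl a' := by
    intro a
    rcases h' : ρ.symm (Sum.inl a) with a' | b
    · exact ⟨a', rfl⟩
    · exact absurd (ρ.symm.injective (h'.trans (hinv b).symm)) (by simp)
  choose f hf using hl
  choose g hg using hl'
  refine ⟨⟨f, g, ?_, ?_⟩, ?_⟩
  · intro a
    have : (Sum.inl (g (f a)) : A ⊕ B) = Sum.inl a := by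
      rw [← hg (f a), ← hf a, Equiv.symm_apply_apply]
    simpa using this
  · intro a
    have : (Sum.inl (f (g a)) : A ⊕ B) = Sum.inl a := by
      rw [← hf (g a), ← hg a, Equiv.apply_symm_apply]
    simpa using this
  · ext s
    cases s with
    | inl a => simp [hf a]
    | inr b => simp [h b]

/-- A permutation of a sum type fixing the left component pointwise is `sumCongr 1 π`. -/
private lemma perm_fix_inl_eq_sumCongr {A B : Type*} (ρ : Equiv.Perm (A ⊕ B))
    (h : ∀ a, ρ (Sum.inl a) = Sum.inl a) :
    ∃ π : Equiv.Perm B, ρ = Equiv.sumCongr (Equiv.refl A) π := by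
  have hinv : ∀ a, ρ.symm (Sum.inl a) = Sum.inl a := by
    intro a
    apply ρ.injective
    rw [Equiv.apply_symm_apply, h]
  have hl : ∀ b, ∃ b', ρ (Sum.inr b) = Sum.inr b' := by
    intro b
    rcases h' : ρ (Sum.inr b) with a | b'
    · exact absurd (ρ.injective (h'.trans (h a).symm)) (by simp)
    · exact ⟨b', rfl⟩
  have hl' : ∀ b, ∃ b', ρ.symm (Sum.inr b) = Sum.inr b' := by
    intro b
    rcases h' : ρ.symm (Sum.inr b) with a | b'
    · exact absurd (ρ.symm.injective (h'.trans (hinv a).symm)) (by simp)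
    · exact ⟨b', rfl⟩
  choose f hf using hl
  choose g hg using hl'
  refine ⟨⟨f, g, ?_, ?_⟩, ?_⟩
  · intro b
    have : (Sum.inr (g (f b)) : A ⊕ B) = Sum.inr b := by
      rw [← hg (f b), ← hf b, Equiv.symm_apply_apply]
    simpa using this
  · intro b
    have : (Sum.inr (f (g b)) : A ⊕ B) = Sum.inr b := by
      rw [← hf (g b), ← hg b, Equiv.apply_symm_apply]
    simpa using this
  · ext s
    cases s with
    | inl a => simp [h a]
    | inr b => simp [hf b]

/-- Any injection `Fin n → Fin N` extends to an equivalence `Fin n ⊕ Fin (N-n) ≃ Fin N`. -/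
private lemma exists_equiv_extend {n N : ℕ} (f : Fin n → Fin N)
    (hf : Function.Injective f) :
    ∃ u : (Fin n ⊕ Fin (N - n)) ≃ Fin N, ∀ a, u (Sum.inl a) = f a := by
  classical
  have h1 : Fintype.card {x : Fin N // x ∈ Set.range f} = n := by
    rw [Fintype.card_congr (Equiv.ofInjective f hf).symm, Fintype.card_fin]
  have h2 : Fintype.card {x : Fin N // ¬ x ∈ Set.range f} = N - n := by
    rw [Fintype.card_subtype_compl, h1, Fintype.card_fin]
  let e1 : Fin n ≃ {x : Fin N // x ∈ Set.range f} := Equiv.ofInjective f hf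
  let e2 : Fin (N - n) ≃ {x : Fin N // ¬ x ∈ Set.range f} :=
    Fintype.equivOfCardEq (by rw [h2, Fintype.card_fin])
  refine ⟨(Equiv.sumCongr e1 e2).trans (Equiv.sumCompl (· ∈ Set.range f)), ?_⟩
  intro a
  simp [e1]

/-- Summing `G ρ` over permutations fixing the right component pointwise. -/
private lemma sum_perm_fix_inr {A B : Type*} [DecidableEq A] [DecidableEq B]
    [Fintype A] [Fintype B] (G : Equiv.Perm (A ⊕ B) → ℝ) :
    (∑ ρ : Equiv.Perm (A ⊕ B), if ∀ b, ρ (Sum.inr b) = Sum.inr b then G ρ else 0)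
      = ∑ π : Equiv.Perm A, G (Equiv.sumCongr π (Equiv.refl B)) := by
  classical
  rw [← Finset.sum_filter]
  symm
  refine Finset.sum_bij (fun π _ => Equiv.sumCongr π (Equiv.refl B)) ?_ ?_ ?_ ?_
  · intro π _
    simp
  · intro π1 _ π2 _ h
    ext a
    have := congrArg (fun ρ : Equiv.Perm (A ⊕ B) => ρ (Sum.inl a)) h
    simpa using this
  · intro ρ hρ
    simp only [Finset.mem_filter, Finset.mem_univ, true_and] at hρ
    obtain ⟨π, rfl⟩ := perm_fix_inr_eq_sumCongr ρ hρ
    exact ⟨π, Finset.mem_univ _, rfl⟩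
  · intro π _
    rfl

/-- Key counting lemma: summing `F (u ∘ inl)` over all equivalences
`Fin n ⊕ Fin (N-n) ≃ Fin N` equals `(N-n)!` times the sum of `F` over all functions,
provided `F` vanishes on non-injective functions. -/
private lemma sum_equiv_comp_inl {n N : ℕ} (F : (Fin n → Fin N) → ℝ)
    (hF : ∀ f, ¬ Function.Injective f → F f = 0) :
    (∑ u : (Fin n ⊕ Fin (N - n)) ≃ Fin N, F (fun a => u (Sum.inl a)))
      = ((N - n).factorial : ℝ) * ∑ f : Fin n → Fin N, F f := by
  classical
  have step1 : (∑ u : (Fin n ⊕ Fin (N - n)) ≃ Fin N, F (fun a => u (Sum.inl a)))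
      = ∑ f : Fin n → Fin N, ∑ u : (Fin n ⊕ Fin (N - n)) ≃ Fin N,
          if (fun a => u (Sum.inl a)) = f then F f else 0 := by
    rw [Finset.sum_comm]
    refine Finset.sum_congr rfl fun u _ => ?_
    rw [Finset.sum_ite_eq Finset.univ (fun a => u (Sum.inl a)) F]
    simp
  rw [step1, Finset.mul_sum]
  refine Finset.sum_congr rfl fun f _ => ?_
  by_cases hinj : Function.Injective f
  · obtain ⟨u₀, hu₀⟩ := exists_equiv_extend f hinj
    rw [← Finset.sum_filter, Finset.sum_const]
    have hcard : (Finset.univ.filter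
        (fun u : (Fin n ⊕ Fin (N - n)) ≃ Fin N => (fun a => u (Sum.inl a)) = f)).card
        = (N - n).factorial := by
      have hbij : (Finset.univ : Finset (Equiv.Perm (Fin (N - n)))).card
          = (Finset.univ.filter
            (fun u : (Fin n ⊕ Fin (N - n)) ≃ Fin N => (fun a => u (Sum.inl a)) = f)).card := by
        refine Finset.card_bij
          (fun (π : Equiv.Perm (Fin (N - n))) _ =>
            (Equiv.sumCongr (Equiv.refl (Fin n)) π).trans u₀) ?_ ?_ ?_
        · intro π _
          simp only [Finset.mem_filter, Finset.mem_univ, true_and]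
          funext a
          simp [hu₀ a]
        · intro π1 _ π2 _ h
          ext b
          have := congrArg (fun u : (Fin n ⊕ Fin (N - n)) ≃ Fin N => u₀.symm (u (Sum.inr b))) h
          exact congrArg Fin.val (by simpa using this)
        · intro u hu
          simp only [Finset.mem_filter, Finset.mem_univ, true_and] at hu
          have hfix : ∀ a, (u.trans u₀.symm) (Sum.inl a) = Sum.inl a := by
            intro a
            apply u₀.injective
            simp only [Equiv.trans_apply, Equiv.apply_symm_apply]
            rw [hu₀ a, ← congrFun hu a]
          obtain ⟨π, hπ⟩ := perm_fix_inl_eq_sumCongr (u.trans u₀.symm) hfix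
          refine ⟨π, Finset.mem_univ _, ?_⟩
          show (Equiv.sumCongr (Equiv.refl (Fin n)) π).trans u₀ = u
          rw [← hπ]
          ext s
          simp
      rw [Finset.card_univ, Fintype.card_perm, Fintype.card_fin] at hbij
      exact hbij.symm
    rw [hcard]
    simp [mul_comm]
  · simp [hF f hinj]

/-- Reindexing a sum over permutations of a sum type by composing with `Sum.inl`. -/
private lemma sum_perm_comp_inl {n N : ℕ} (d : (Fin n ⊕ Fin (N - n)) ≃ Fin N)
    (F : (Fin n → Fin N) → ℝ) (hF : ∀ f, ¬ Function.Injective f → F f = 0) :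
    (∑ ν : Equiv.Perm (Fin n ⊕ Fin (N - n)), F (fun a => d (ν (Sum.inl a))))
      = ((N - n).factorial : ℝ) * ∑ f : Fin n → Fin N, F f := by
  have hre : (∑ ν : Equiv.Perm (Fin n ⊕ Fin (N - n)), F (fun a => d (ν (Sum.inl a))))
      = ∑ u : (Fin n ⊕ Fin (N - n)) ≃ Fin N, F (fun a => u (Sum.inl a)) := by
    refine Fintype.sum_bijective (fun ν => ν.trans d) ?_ _ _ (fun ν => rfl)
    constructor
    · intro ν1 ν2 h
      ext s
      exact d.injective (DFunLike.congr_fun h s)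
    · intro u
      exact ⟨u.trans d.symm, by ext s; simp⟩
  rw [hre]
  exact sum_equiv_comp_inl F hF

end AuxLemmas

/-- Let `N ≥ 1` and let `φ_0, …, φ_{N−1} : ℝ → ℝ` be an orthonormal
family in `L²(ℝ)`.  Define `K_N(x,y) = Σ_{i<N} φ_i(x) φ_i(y)` and
`P_N(x_1,…,x_N) = (1/N!) det(K_N(x_i,x_j))`.  Then for every `1 ≤ n ≤ N` and all
`x_1, …, x_n ∈ ℝ`,
`(N!/(N−n)!) ∫_{ℝ^{N−n}} P_N(x_1,…,x_N) dx_{n+1} ⋯ dx_N = det(K_N(x_i,x_j))_{i,j≤n}`. -/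
theorem correlation_function_identity
    (N n : ℕ) (hN : 1 ≤ N) (hn : 1 ≤ n) (hnN : n ≤ N)
    (φ : Fin N → ℝ → ℝ)
    (hφ : ∀ i, MemLp (φ i) 2 (volume : Measure ℝ))
    (horth : ∀ i j, ∫ t : ℝ, φ i t * φ j t = if i = j then (1 : ℝ) else 0)
    (x : Fin n → ℝ) :
    ((N.factorial : ℝ) / ((N - n).factorial : ℝ)) *
      ∫ y : Fin (N - n) → ℝ,
        ((1 : ℝ) / (N.factorial : ℝ)) *
          Matrix.det (Matrix.of fun i j : Fin N =>
            ∑ k : Fin N,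
              φ k (Fin.append x y (Fin.cast (by omega) i)) *
              φ k (Fin.append x y (Fin.cast (by omega) j)))
    = Matrix.det (Matrix.of fun i j : Fin n =>
        ∑ k : Fin N, φ k (x i) * φ k (x j)) := by
  classical
  have hNn : n + (N - n) = N := by omega
  obtain ⟨d, happ⟩ : ∃ d : (Fin n ⊕ Fin (N - n)) ≃ Fin N,
      ∀ (y : Fin (N - n) → ℝ) (s : Fin n ⊕ Fin (N - n)),
        Fin.append x y (Fin.cast (by omega : N = n + (N - n)) (d s)) = Sum.elim x y s := by
    refine ⟨finSumFinEquiv.trans (finCongr hNn), ?_⟩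
    intro y s
    cases s with
    | inl a =>
        show Fin.append x y (Fin.cast _ (finCongr hNn (finSumFinEquiv (Sum.inl a)))) = x a
        rw [finSumFinEquiv_apply_left]
        simp [Fin.append_left]
    | inr b =>
        show Fin.append x y (Fin.cast _ (finCongr hNn (finSumFinEquiv (Sum.inr b)))) = y b
        rw [finSumFinEquiv_apply_right]
        simp [Fin.append_right]
  -- integrability of products of two of the functions
  have hint : ∀ a b : Fin N, Integrable (fun t => φ a t * φ b t) volume := by
    intro a b
    have h1 : MemLp (φ a • φ b) 1 volume :=
      MemLp.smul (hφ b) (hφ a) (p := 2) (q := 2) (r := 1)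
    have := memLp_one_iff_integrable.mp h1
    exact this
  -- Step 1 : expansion of the determinant as a double sum over permutations
  have hdet : ∀ y : Fin (N - n) → ℝ,
      Matrix.det (Matrix.of fun i j : Fin N =>
        ∑ k : Fin N,
          φ k (Fin.append x y (Fin.cast (by omega) i)) *
          φ k (Fin.append x y (Fin.cast (by omega) j)))
      = ∑ ν : Equiv.Perm (Fin n ⊕ Fin (N - n)), ∑ τ : Equiv.Perm (Fin n ⊕ Fin (N - n)),
          (((Equiv.Perm.sign ν : ℤ) : ℝ) * ((Equiv.Perm.sign τ : ℤ) : ℝ)) *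
          ((∏ a : Fin n, φ (d (ν (Sum.inl a))) (x a) * φ (d (τ (Sum.inl a))) (x a)) *
           ∏ b : Fin (N - n), φ (d (ν (Sum.inr b))) (y b) * φ (d (τ (Sum.inr b))) (y b)) := by
    intro y
    have hA : (Matrix.of fun i j : Fin N =>
          ∑ k : Fin N,
            φ k (Fin.append x y (Fin.cast (by omega) i)) *
            φ k (Fin.append x y (Fin.cast (by omega) j)))
        = Matrix.transpose
            (Matrix.of fun k i : Fin N => φ k (Fin.append x y (Fin.cast (by omega) i)))
          * (Matrix.of fun k i : Fin N => φ k (Fin.append x y (Fin.cast (by omega) i))) := by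
      ext i j
      simp [Matrix.mul_apply]
    rw [hA, Matrix.det_mul, Matrix.det_transpose]
    have hdA : Matrix.det (Matrix.of fun k i : Fin N =>
          φ k (Fin.append x y (Fin.cast (by omega) i)))
        = ∑ ν : Equiv.Perm (Fin n ⊕ Fin (N - n)),
            ((Equiv.Perm.sign ν : ℤ) : ℝ) * ∏ s, φ (d (ν s)) (Sum.elim x y s) := by
      rw [Matrix.det_apply']
      refine (Fintype.sum_equiv (Equiv.permCongr d) _ _ ?_).symm
      intro ν
      rw [Equiv.Perm.sign_permCongr]
      congr 1
      rw [← Equiv.prod_comp d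
        (fun i => (Matrix.of fun k i : Fin N => φ k (Fin.append x y (Fin.cast (by omega) i)))
          ((d.permCongr ν) i) i)]
      refine Finset.prod_congr rfl fun s _ => ?_
      have h2 : (d.permCongr ν) (d s) = d (ν s) := by simp [Equiv.permCongr_apply]
      rw [h2]
      simp only [Matrix.of_apply]
      rw [happ y s]
    rw [hdA, Finset.sum_mul_sum]
    refine Finset.sum_congr rfl fun ν _ => Finset.sum_congr rfl fun τ _ => ?_
    rw [mul_mul_mul_comm]
    congr 1
    rw [← Finset.prod_mul_distrib, Fintype.prod_sum_type]
    simp only [Sum.elim_inl, Sum.elim_inr]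
  -- Step 2 : integrate the double sum; orthonormality produces a delta factor
  have hIy : (∫ y : Fin (N - n) → ℝ,
        ∑ ν : Equiv.Perm (Fin n ⊕ Fin (N - n)), ∑ τ : Equiv.Perm (Fin n ⊕ Fin (N - n)),
          (((Equiv.Perm.sign ν : ℤ) : ℝ) * ((Equiv.Perm.sign τ : ℤ) : ℝ)) *
          ((∏ a : Fin n, φ (d (ν (Sum.inl a))) (x a) * φ (d (τ (Sum.inl a))) (x a)) *
           ∏ b : Fin (N - n), φ (d (ν (Sum.inr b))) (y b) * φ (d (τ (Sum.inr b))) (y b)))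
      = ∑ ν : Equiv.Perm (Fin n ⊕ Fin (N - n)), ∑ τ : Equiv.Perm (Fin n ⊕ Fin (N - n)),
          (((Equiv.Perm.sign ν : ℤ) : ℝ) * ((Equiv.Perm.sign τ : ℤ) : ℝ)) *
          ((∏ a : Fin n, φ (d (ν (Sum.inl a))) (x a) * φ (d (τ (Sum.inl a))) (x a)) *
           if ∀ b, ν (Sum.inr b) = τ (Sum.inr b) then (1:ℝ) else 0) := by
    have hterm : ∀ ν τ : Equiv.Perm (Fin n ⊕ Fin (N - n)),
        Integrable (fun y : Fin (N - n) → ℝ =>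
          (((Equiv.Perm.sign ν : ℤ) : ℝ) * ((Equiv.Perm.sign τ : ℤ) : ℝ)) *
          ((∏ a : Fin n, φ (d (ν (Sum.inl a))) (x a) * φ (d (τ (Sum.inl a))) (x a)) *
           ∏ b : Fin (N - n), φ (d (ν (Sum.inr b))) (y b) * φ (d (τ (Sum.inr b))) (y b)))
          volume := by
      intro ν τ
      have h1 : Integrable (fun y : Fin (N - n) → ℝ =>
          ∏ b : Fin (N - n), φ (d (ν (Sum.inr b))) (y b) * φ (d (τ (Sum.inr b))) (y b)) volume :=
        Integrable.fintype_prod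
          (f := fun b t => φ (d (ν (Sum.inr b))) t * φ (d (τ (Sum.inr b))) t)
          (fun b => hint _ _)
      exact (h1.const_mul _).const_mul _
    rw [integral_finset_sum _ (fun ν _ => integrable_finset_sum _ (fun τ _ => hterm ν τ))]
    refine Finset.sum_congr rfl fun ν _ => ?_
    rw [integral_finset_sum _ (fun τ _ => hterm ν τ)]
    refine Finset.sum_congr rfl fun τ _ => ?_
    have e1 : (fun y : Fin (N - n) → ℝ =>
          (((Equiv.Perm.sign ν : ℤ) : ℝ) * ((Equiv.Perm.sign τ : ℤ) : ℝ)) *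
          ((∏ a : Fin n, φ (d (ν (Sum.inl a))) (x a) * φ (d (τ (Sum.inl a))) (x a)) *
           ∏ b : Fin (N - n), φ (d (ν (Sum.inr b))) (y b) * φ (d (τ (Sum.inr b))) (y b)))
        = (fun y : Fin (N - n) → ℝ =>
          ((((Equiv.Perm.sign ν : ℤ) : ℝ) * ((Equiv.Perm.sign τ : ℤ) : ℝ)) *
          (∏ a : Fin n, φ (d (ν (Sum.inl a))) (x a) * φ (d (τ (Sum.inl a))) (x a))) *
           ∏ b : Fin (N - n), φ (d (ν (Sum.inr b))) (y b) * φ (d (τ (Sum.inr b))) (y b)) := by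
      funext y; ring
    rw [e1, integral_const_mul, mul_assoc]
    congr 1
    rw [integral_fintype_prod_volume_eq_prod
      (f := fun b t => φ (d (ν (Sum.inr b))) t * φ (d (τ (Sum.inr b))) t)]
    have h3 : ∀ b : Fin (N - n), (∫ t : ℝ, φ (d (ν (Sum.inr b))) t * φ (d (τ (Sum.inr b))) t)
        = if ν (Sum.inr b) = τ (Sum.inr b) then (1:ℝ) else 0 := by
      intro b
      rw [horth]
      simp [d.injective.eq_iff]
    simp only [h3]
    rw [Finset.prod_boole]
    simp
  -- Step 3 : the inner sum over τ reduces to a sum over permutations of `Fin n`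
  have hinner : ∀ ν : Equiv.Perm (Fin n ⊕ Fin (N - n)),
      (∑ τ : Equiv.Perm (Fin n ⊕ Fin (N - n)),
          (((Equiv.Perm.sign ν : ℤ) : ℝ) * ((Equiv.Perm.sign τ : ℤ) : ℝ)) *
          ((∏ a : Fin n, φ (d (ν (Sum.inl a))) (x a) * φ (d (τ (Sum.inl a))) (x a)) *
           if ∀ b, ν (Sum.inr b) = τ (Sum.inr b) then (1:ℝ) else 0))
      = ∑ π : Equiv.Perm (Fin n),
          ((Equiv.Perm.sign π : ℤ) : ℝ) *
          ∏ a : Fin n, φ (d (ν (Sum.inl a))) (x a) * φ (d (ν (Sum.inl (π a)))) (x a) := by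
    intro ν
    rw [← Fintype.sum_equiv (Equiv.mulLeft ν)
      (fun ρ => (((Equiv.Perm.sign ν : ℤ) : ℝ) * ((Equiv.Perm.sign (ν * ρ) : ℤ) : ℝ)) *
          ((∏ a : Fin n, φ (d (ν (Sum.inl a))) (x a) * φ (d ((ν * ρ) (Sum.inl a))) (x a)) *
           if ∀ b, ν (Sum.inr b) = (ν * ρ) (Sum.inr b) then (1:ℝ) else 0))
      _ (fun ρ => rfl)]
    have step : (∑ ρ : Equiv.Perm (Fin n ⊕ Fin (N - n)),
        (((Equiv.Perm.sign ν : ℤ) : ℝ) * ((Equiv.Perm.sign (ν * ρ) : ℤ) : ℝ)) *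
          ((∏ a : Fin n, φ (d (ν (Sum.inl a))) (x a) * φ (d ((ν * ρ) (Sum.inl a))) (x a)) *
           if ∀ b, ν (Sum.inr b) = (ν * ρ) (Sum.inr b) then (1:ℝ) else 0))
        = ∑ ρ : Equiv.Perm (Fin n ⊕ Fin (N - n)),
            @ite ℝ (∀ b, ρ (Sum.inr b) = Sum.inr b) Fintype.decidableForallFintype
              (((Equiv.Perm.sign ρ : ℤ) : ℝ) *
                ∏ a : Fin n, φ (d (ν (Sum.inl a))) (x a) * φ (d (ν (ρ (Sum.inl a)))) (x a))
              0 := by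
      refine Finset.sum_congr rfl fun ρ _ => ?_
      have hsign : (((Equiv.Perm.sign ν : ℤ) : ℝ) * ((Equiv.Perm.sign (ν * ρ) : ℤ) : ℝ))
          = ((Equiv.Perm.sign ρ : ℤ) : ℝ) := by
        rw [Equiv.Perm.sign_mul]
        rcases Int.units_eq_one_or (Equiv.Perm.sign ν) with h | h <;> rw [h] <;> simp
      have hcond : (∀ b, ν (Sum.inr b) = (ν * ρ) (Sum.inr b))
          ↔ (∀ b, ρ (Sum.inr b) = Sum.inr b) := by
        simp only [Equiv.Perm.mul_apply]
        constructor
        · intro h b; exact ν.injective (h b).symm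
        · intro h b; rw [h b]
      simp only [Equiv.Perm.mul_apply, hsign]
      by_cases h : ∀ b, ρ (Sum.inr b) = Sum.inr b
      · rw [if_pos h]
        split_ifs with h1
        · simp [h1]
        · exact absurd (hcond.mpr h) h1
      · rw [if_neg h]
        split_ifs with h1
        · exact absurd (hcond.mp h1) h
        · simp only [h1, ↓reduceIte, mul_zero]
    rw [step]
    refine (sum_perm_fix_inr (A := Fin n) (B := Fin (N - n)) (fun ρ =>
        ((Equiv.Perm.sign ρ : ℤ) : ℝ) *
        ∏ a : Fin n, φ (d (ν (Sum.inl a))) (x a) * φ (d (ν (ρ (Sum.inl a)))) (x a))).trans ?_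
    refine Finset.sum_congr rfl fun π _ => ?_
    rw [Equiv.Perm.sign_sumCongr]
    simp [Equiv.sumCongr_apply]
  -- Step 4 : reindex the outer sum over bijections and count extensions
  have houter : (∑ ν : Equiv.Perm (Fin n ⊕ Fin (N - n)),
        ∑ π : Equiv.Perm (Fin n),
          ((Equiv.Perm.sign π : ℤ) : ℝ) *
          ∏ a : Fin n, φ (d (ν (Sum.inl a))) (x a) * φ (d (ν (Sum.inl (π a)))) (x a))
      = ((N - n).factorial : ℝ) *
          ∑ f : Fin n → Fin N, ∑ π : Equiv.Perm (Fin n),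
            ((Equiv.Perm.sign π : ℤ) : ℝ) *
            ∏ a : Fin n, φ (f a) (x a) * φ (f (π a)) (x a) := by
    refine sum_perm_comp_inl d (fun f => ∑ π : Equiv.Perm (Fin n),
        ((Equiv.Perm.sign π : ℤ) : ℝ) *
        ∏ a : Fin n, φ (f a) (x a) * φ (f (π a)) (x a)) ?_
    intro f hf
    have hdet2 : (∑ π : Equiv.Perm (Fin n), ((Equiv.Perm.sign π : ℤ) : ℝ) *
          ∏ a : Fin n, φ (f a) (x a) * φ (f (π a)) (x a))
        = Matrix.det (Matrix.of fun u v : Fin n => φ (f v) (x v) * φ (f u) (x v)) := by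
      rw [Matrix.det_apply']
      simp only [Matrix.of_apply]
    show (∑ π : Equiv.Perm (Fin n), ((Equiv.Perm.sign π : ℤ) : ℝ) *
        ∏ a : Fin n, φ (f a) (x a) * φ (f (π a)) (x a)) = 0
    rw [hdet2]
    obtain ⟨u, u', h1, h2⟩ := Function.not_injective_iff.mp hf
    exact Matrix.det_zero_of_row_eq h2
      (funext fun v => by simp only [Matrix.of_apply, h1])
  -- Step 5 : the sum over all functions gives the reduced determinant
  have hfinal : (∑ f : Fin n → Fin N, ∑ π : Equiv.Perm (Fin n),
        ((Equiv.Perm.sign π : ℤ) : ℝ) *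
        ∏ a : Fin n, φ (f a) (x a) * φ (f (π a)) (x a))
      = Matrix.det (Matrix.of fun i j : Fin n => ∑ k : Fin N, φ k (x i) * φ k (x j)) := by
    rw [Matrix.det_apply']
    have expand : ∀ π : Equiv.Perm (Fin n),
        (∏ a : Fin n,
          (Matrix.of fun i j : Fin n => ∑ k : Fin N, φ k (x i) * φ k (x j)) (π a) a)
        = ∑ f : Fin n → Fin N, ∏ a : Fin n, φ (f a) (x (π a)) * φ (f a) (x a) := by
      intro π
      simp only [Matrix.of_apply]
      rw [Finset.prod_univ_sum (fun _ => (Finset.univ : Finset (Fin N)))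
        (fun a k => φ k (x (π a)) * φ k (x a))]
      rw [Fintype.piFinset_univ]
    simp only [expand, Finset.mul_sum]
    conv_rhs => rw [Finset.sum_comm]
    refine Finset.sum_congr rfl fun f _ => ?_
    have h1 : ∀ π : Equiv.Perm (Fin n),
        (∏ a : Fin n, φ (f a) (x (π a)) * φ (f a) (x a))
        = (∏ a : Fin n, φ (f (π⁻¹ a)) (x a)) * ∏ a : Fin n, φ (f a) (x a) := by
      intro π
      rw [Finset.prod_mul_distrib]
      congr 1
      rw [← Equiv.prod_comp π (fun a => φ (f (π⁻¹ a)) (x a))]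
      refine Finset.prod_congr rfl fun a _ => ?_
      rw [← Equiv.Perm.mul_apply, inv_mul_cancel, Equiv.Perm.one_apply]
    have h2 : ∀ π : Equiv.Perm (Fin n),
        (∏ a : Fin n, φ (f a) (x a) * φ (f (π a)) (x a))
        = (∏ a : Fin n, φ (f (π a)) (x a)) * ∏ a : Fin n, φ (f a) (x a) := by
      intro π
      rw [← Finset.prod_mul_distrib]
      exact Finset.prod_congr rfl fun a _ => mul_comm _ _
    simp only [h1, h2]
    refine Fintype.sum_equiv (Equiv.inv (Equiv.Perm (Fin n))) _ _ ?_
    intro π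
    simp [Equiv.Perm.sign_inv]
  -- Put everything together
  have key : (∫ y : Fin (N - n) → ℝ,
        Matrix.det (Matrix.of fun i j : Fin N =>
          ∑ k : Fin N,
            φ k (Fin.append x y (Fin.cast (by omega) i)) *
            φ k (Fin.append x y (Fin.cast (by omega) j))))
      = ((N - n).factorial : ℝ) *
          Matrix.det (Matrix.of fun i j : Fin n => ∑ k : Fin N, φ k (x i) * φ k (x j)) := by
    calc (∫ y : Fin (N - n) → ℝ,
        Matrix.det (Matrix.of fun i j : Fin N =>
          ∑ k : Fin N,
            φ k (Fin.append x y (Fin.cast (by omega) i)) *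
            φ k (Fin.append x y (Fin.cast (by omega) j))))
        = ∫ y : Fin (N - n) → ℝ,
            ∑ ν : Equiv.Perm (Fin n ⊕ Fin (N - n)), ∑ τ : Equiv.Perm (Fin n ⊕ Fin (N - n)),
              (((Equiv.Perm.sign ν : ℤ) : ℝ) * ((Equiv.Perm.sign τ : ℤ) : ℝ)) *
              ((∏ a : Fin n, φ (d (ν (Sum.inl a))) (x a) * φ (d (τ (Sum.inl a))) (x a)) *
               ∏ b : Fin (N - n), φ (d (ν (Sum.inr b))) (y b) * φ (d (τ (Sum.inr b))) (y b)) := by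
          exact congrArg _ (funext hdet)
      _ = _ := hIy
      _ = ∑ ν : Equiv.Perm (Fin n ⊕ Fin (N - n)),
            ∑ π : Equiv.Perm (Fin n),
              ((Equiv.Perm.sign π : ℤ) : ℝ) *
              ∏ a : Fin n, φ (d (ν (Sum.inl a))) (x a) * φ (d (ν (Sum.inl (π a)))) (x a) :=
          Finset.sum_congr rfl fun ν _ => hinner ν
      _ = ((N - n).factorial : ℝ) *
            ∑ f : Fin n → Fin N, ∑ π : Equiv.Perm (Fin n),
              ((Equiv.Perm.sign π : ℤ) : ℝ) *
              ∏ a : Fin n, φ (f a) (x a) * φ (f (π a)) (x a) := houter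
      _ = ((N - n).factorial : ℝ) *
            Matrix.det (Matrix.of fun i j : Fin n => ∑ k : Fin N, φ k (x i) * φ k (x j)) := by
          rw [hfinal]
  rw [integral_const_mul, key]
  have hf1 : (N.factorial : ℝ) ≠ 0 := Nat.cast_ne_zero.mpr (Nat.factorial_ne_zero N)
  have hf2 : ((N - n).factorial : ℝ) ≠ 0 := Nat.cast_ne_zero.mpr (Nat.factorial_ne_zero (N - n))
  field_simp
end
end

section
/- Let N ≥ 1, let φ_0, …, φ_{N−1} : ℝ → ℝ be an orthonormal family in L²(ℝ), set K_N(x,y) = Σ_{i=0}^{N−1} φ_i(x) φ_i(y) and P_N(x_1,…,x_N) = (1/N!) det( K_N(x_i, x_j) )_{i,j=1}^N. Then for every bounded measurable g : ℝ → ℂ, ∫_{ℝ^N} ∏_{i=1}^N (1 + g(x_i)) · P_N(x_1,…,x_N) dx_1 ⋯ dx_N = det( I_N + M ), where M is the N×N matrix with entries M_{ij} = ∫_ℝ g(x) φ_i(x) φ_j(x) dx for 0 ≤ i, j ≤ N−1. -/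
open MeasureTheory Complex Filter Set

noncomputable section

/-- Auxiliary combinatorial identity: the signed double sum over pairs of permutations
of products of matrix entries equals `N!` times the determinant. -/
theorem sum_perm_sign_mul_prod_eq_det (N : ℕ) (D : Matrix (Fin N) (Fin N) ℂ) :
    ∑ σ : Equiv.Perm (Fin N), ∑ τ : Equiv.Perm (Fin N),
      (((Equiv.Perm.sign σ : ℤ) : ℂ) * ((Equiv.Perm.sign τ : ℤ) : ℂ)) * ∏ i, D (σ i) (τ i)
    = (N.factorial : ℂ) * D.det := by
  classical
  set s : Equiv.Perm (Fin N) → ℂ := fun σ => ((Equiv.Perm.sign σ : ℤ) : ℂ) with hs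
  have hss : ∀ σ, s σ * s σ = 1 := by
    intro σ
    rw [hs, ← Int.cast_mul, ← Units.val_mul, Int.units_mul_self, Units.val_one, Int.cast_one]
  have hinner : ∀ σ, ∑ τ : Equiv.Perm (Fin N), s τ * ∏ i, D (σ i) (τ i) = s σ * D.det := by
    intro σ
    rw [← Equiv.sum_comp (Equiv.mulRight σ) (fun τ => s τ * ∏ i, D (σ i) (τ i))]
    have hterm : ∀ π : Equiv.Perm (Fin N),
        s ((Equiv.mulRight σ) π) * ∏ i, D (σ i) (((Equiv.mulRight σ) π) i)
        = s σ * (s π * ∏ j, D.transpose (π j) j) := by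
      intro π
      have h1 : s (π * σ) = s π * s σ := by
        simp only [hs, _root_.map_mul, Units.val_mul, Int.cast_mul]
      have h2 : ∏ i, D (σ i) ((π * σ) i) = ∏ j, D.transpose (π j) j := by
        simp only [Equiv.Perm.mul_apply, Matrix.transpose_apply]
        exact Equiv.prod_comp σ (fun j => D j (π j))
      simp only [Equiv.coe_mulRight] at *
      rw [h1, h2]; ring
    rw [Finset.sum_congr rfl (fun π _ => hterm π), ← Finset.mul_sum, ← Matrix.det_apply',
      Matrix.det_transpose]
  calc ∑ σ : Equiv.Perm (Fin N), ∑ τ : Equiv.Perm (Fin N),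
        (((Equiv.Perm.sign σ : ℤ) : ℂ) * ((Equiv.Perm.sign τ : ℤ) : ℂ)) * ∏ i, D (σ i) (τ i)
      = ∑ σ : Equiv.Perm (Fin N), ∑ τ : Equiv.Perm (Fin N), (s σ * s τ) * ∏ i, D (σ i) (τ i) := rfl
    _ = ∑ σ : Equiv.Perm (Fin N), s σ * ∑ τ : Equiv.Perm (Fin N), s τ * ∏ i, D (σ i) (τ i) := by
        simp_rw [Finset.mul_sum, mul_assoc]
    _ = ∑ σ : Equiv.Perm (Fin N), s σ * (s σ * D.det) := by simp_rw [hinner]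
    _ = ∑ _σ : Equiv.Perm (Fin N), D.det := by simp_rw [← mul_assoc, hss, one_mul]
    _ = (N.factorial : ℂ) * D.det := by
        rw [Finset.sum_const, Finset.card_univ, Fintype.card_perm, Fintype.card_fin,
          nsmul_eq_mul]

/-- Pointwise expansion of the integrand. -/
theorem pointwise_expand (N : ℕ) (φ : Fin N → ℝ → ℝ) (g : ℝ → ℂ) (x : Fin N → ℝ) :
    (∏ i : Fin N, (1 + g (x i))) *
      ((((1 : ℝ) / (N.factorial : ℝ)) *
        Matrix.det (Matrix.of fun i j : Fin N =>
          ∑ k : Fin N, φ k (x i) * φ k (x j)) : ℝ) : ℂ)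
    = ((N.factorial : ℂ))⁻¹ * ∑ σ : Equiv.Perm (Fin N), ∑ τ : Equiv.Perm (Fin N),
        (((Equiv.Perm.sign σ : ℤ) : ℂ) * ((Equiv.Perm.sign τ : ℤ) : ℂ)) *
          ∏ i : Fin N, ((1 + g (x i)) * ((φ (σ i) (x i) * φ (τ i) (x i) : ℝ) : ℂ)) := by
  classical
  set A : Matrix (Fin N) (Fin N) ℝ := Matrix.of fun i k => φ k (x i) with hA
  have hK : (Matrix.of fun i j : Fin N => ∑ k : Fin N, φ k (x i) * φ k (x j))
      = A * A.transpose := by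
    ext i j
    simp [Matrix.mul_apply, hA]
  have hdet : ((A.det : ℝ) : ℂ) = ∑ σ : Equiv.Perm (Fin N),
      ((Equiv.Perm.sign σ : ℤ) : ℂ) * ∏ i : Fin N, ((φ (σ i) (x i) : ℝ) : ℂ) := by
    rw [← Matrix.det_transpose]
    rw [show ((A.transpose.det : ℝ) : ℂ) = (Complex.ofRealHom : ℝ →+* ℂ) A.transpose.det from rfl,
      RingHom.map_det, Matrix.det_apply']
    refine Finset.sum_congr rfl fun σ _ => ?_
    refine congrArg _ (Finset.prod_congr rfl fun i _ => ?_)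
    simp [hA, Matrix.map_apply]
  rw [hK, Matrix.det_mul, Matrix.det_transpose]
  push_cast
  rw [hdet, Finset.sum_mul_sum]
  simp_rw [Finset.mul_sum]
  refine Finset.sum_congr rfl fun σ _ => Finset.sum_congr rfl fun τ _ => ?_
  have hprod : ∏ i : Fin N,
        ((1 + g (x i)) * (((φ (σ i) (x i) : ℝ) : ℂ) * ((φ (τ i) (x i) : ℝ) : ℂ)))
      = (∏ i : Fin N, (1 + g (x i))) *
        ((∏ i : Fin N, ((φ (σ i) (x i) : ℝ) : ℂ)) *
          (∏ i : Fin N, ((φ (τ i) (x i) : ℝ) : ℂ))) := by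
    rw [← Finset.prod_mul_distrib, ← Finset.prod_mul_distrib]
  rw [hprod]
  ring

/-- Let `N ≥ 1`, let `φ_0, …, φ_{N−1} : ℝ → ℝ` be an orthonormal
family in `L²(ℝ)`, `K_N(x,y) = Σ_{i<N} φ_i(x) φ_i(y)` and
`P_N(x_1,…,x_N) = (1/N!) det(K_N(x_i,x_j))`.  Then for every bounded measurable
`g : ℝ → ℂ`,
`∫_{ℝ^N} ∏_i (1 + g(x_i)) · P_N(x) dx = det(I_N + M)` where
`M_{ij} = ∫ g(x) φ_i(x) φ_j(x) dx`. -/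
theorem expectation_product_eq_det
    (N : ℕ) (hN : 1 ≤ N)
    (φ : Fin N → ℝ → ℝ)
    (hφ : ∀ i, MemLp (φ i) 2 (volume : Measure ℝ))
    (horth : ∀ i j, ∫ t : ℝ, φ i t * φ j t = if i = j then (1 : ℝ) else 0)
    (g : ℝ → ℂ) (hgmeas : Measurable g) (C : ℝ) (hgbdd : ∀ t : ℝ, ‖g t‖ ≤ C) :
    ∫ x : Fin N → ℝ,
        (∏ i : Fin N, (1 + g (x i))) *
          ((((1 : ℝ) / (N.factorial : ℝ)) *
            Matrix.det (Matrix.of fun i j : Fin N =>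
              ∑ k : Fin N, φ k (x i) * φ k (x j)) : ℝ) : ℂ)
    = Matrix.det ((1 : Matrix (Fin N) (Fin N) ℂ) +
        Matrix.of fun i j : Fin N => ∫ t : ℝ, g t * (φ i t : ℂ) * (φ j t : ℂ)) := by
  classical
  set M : Matrix (Fin N) (Fin N) ℂ :=
    Matrix.of (fun i j : Fin N => ∫ t : ℝ, g t * (φ i t : ℂ) * (φ j t : ℂ)) with hM
  have hmulR : ∀ a b : Fin N, Integrable (fun t => φ a t * φ b t) (volume : Measure ℝ) := by
    intro a b
    rw [← memLp_one_iff_integrable]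
    have := MemLp.smul (𝕜 := ℝ) (hφ b) (hφ a) (r := 1)
      (hpqr := ⟨by norm_num [ENNReal.inv_two_add_inv_two, one_div]⟩)
    exact this
  have hIntg : ∀ a b : Fin N,
      Integrable (fun t => g t * ((φ a t * φ b t : ℝ) : ℂ)) (volume : Measure ℝ) :=
    fun a b => Integrable.bdd_mul ((hmulR a b).ofReal) hgmeas.aestronglyMeasurable (c := C) (Eventually.of_forall hgbdd)
  have hInt : ∀ a b : Fin N,
      Integrable (fun t => (1 + g t) * ((φ a t * φ b t : ℝ) : ℂ)) (volume : Measure ℝ) := by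
    intro a b
    refine Integrable.bdd_mul ((hmulR a b).ofReal)
      ((measurable_const.add hgmeas).aestronglyMeasurable) (c := 1 + C) (Eventually.of_forall fun t => ?_)
    calc ‖1 + g t‖ ≤ ‖(1 : ℂ)‖ + ‖g t‖ := norm_add_le _ _
      _ ≤ 1 + C := by rw [norm_one]; linarith [hgbdd t]
  have hB : ∀ a b : Fin N, (∫ t : ℝ, (1 + g t) * ((φ a t * φ b t : ℝ) : ℂ))
      = ((1 : Matrix (Fin N) (Fin N) ℂ) + M) a b := by
    intro a b
    have hsplit : (fun t : ℝ => (1 + g t) * ((φ a t * φ b t : ℝ) : ℂ))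
        = fun t => ((φ a t * φ b t : ℝ) : ℂ) + g t * ((φ a t * φ b t : ℝ) : ℂ) := by
      funext t; ring
    have h1 : Integrable (fun t : ℝ => ((φ a t * φ b t : ℝ) : ℂ)) volume := (hmulR a b).ofReal
    rw [hsplit, integral_add (f := fun t : ℝ => ((φ a t * φ b t : ℝ) : ℂ))
      (g := fun t : ℝ => g t * ((φ a t * φ b t : ℝ) : ℂ)) h1 (hIntg a b)]
    have e1 : (∫ t : ℝ, ((φ a t * φ b t : ℝ) : ℂ)) = (((if a = b then (1 : ℝ) else 0) : ℝ) : ℂ) :=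
      (integral_ofReal (𝕜 := ℂ) (f := fun t => φ a t * φ b t)).trans (by rw [horth a b]; rfl)
    have e2 : (∫ t : ℝ, g t * ((φ a t * φ b t : ℝ) : ℂ)) = M a b := by
      rw [hM]
      simp only [Matrix.of_apply]
      refine congrArg _ (funext fun t => ?_)
      push_cast
      ring
    rw [e1, e2, Matrix.add_apply, Matrix.one_apply]
    by_cases hab : a = b <;> simp [hab]
  have hIntProd : ∀ σ τ : Equiv.Perm (Fin N),
      Integrable (fun x : Fin N → ℝ =>
        ∏ i : Fin N, ((1 + g (x i)) * ((φ (σ i) (x i) * φ (τ i) (x i) : ℝ) : ℂ))) :=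
    fun σ τ => Integrable.fintype_prod (fun i => hInt (σ i) (τ i))
  calc ∫ x : Fin N → ℝ,
        (∏ i : Fin N, (1 + g (x i))) *
          ((((1 : ℝ) / (N.factorial : ℝ)) *
            Matrix.det (Matrix.of fun i j : Fin N =>
              ∑ k : Fin N, φ k (x i) * φ k (x j)) : ℝ) : ℂ)
      = ∫ x : Fin N → ℝ, ((N.factorial : ℂ))⁻¹ * ∑ σ : Equiv.Perm (Fin N),
          ∑ τ : Equiv.Perm (Fin N),
          (((Equiv.Perm.sign σ : ℤ) : ℂ) * ((Equiv.Perm.sign τ : ℤ) : ℂ)) *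
            ∏ i : Fin N, ((1 + g (x i)) * ((φ (σ i) (x i) * φ (τ i) (x i) : ℝ) : ℂ)) :=
        integral_congr_ae (Eventually.of_forall fun x => pointwise_expand N φ g x)
    _ = ((N.factorial : ℂ))⁻¹ * ∫ x : Fin N → ℝ, ∑ σ : Equiv.Perm (Fin N),
          ∑ τ : Equiv.Perm (Fin N),
          (((Equiv.Perm.sign σ : ℤ) : ℂ) * ((Equiv.Perm.sign τ : ℤ) : ℂ)) *
            ∏ i : Fin N, ((1 + g (x i)) * ((φ (σ i) (x i) * φ (τ i) (x i) : ℝ) : ℂ)) :=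
        integral_const_mul _ _
    _ = ((N.factorial : ℂ))⁻¹ * ∑ σ : Equiv.Perm (Fin N), ∑ τ : Equiv.Perm (Fin N),
          (((Equiv.Perm.sign σ : ℤ) : ℂ) * ((Equiv.Perm.sign τ : ℤ) : ℂ)) *
            ∫ x : Fin N → ℝ,
              ∏ i : Fin N, ((1 + g (x i)) * ((φ (σ i) (x i) * φ (τ i) (x i) : ℝ) : ℂ)) := by
        rw [integral_finset_sum _ (fun σ _ => integrable_finset_sum _
          (fun τ _ => ((hIntProd σ τ).const_mul _)))]
        refine congrArg _ (Finset.sum_congr rfl fun σ _ => ?_)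
        rw [integral_finset_sum _ (fun τ _ => (hIntProd σ τ).const_mul _)]
        exact Finset.sum_congr rfl fun τ _ => integral_const_mul _ _
    _ = ((N.factorial : ℂ))⁻¹ * ∑ σ : Equiv.Perm (Fin N), ∑ τ : Equiv.Perm (Fin N),
          (((Equiv.Perm.sign σ : ℤ) : ℂ) * ((Equiv.Perm.sign τ : ℤ) : ℂ)) *
            ∏ i : Fin N, ((1 : Matrix (Fin N) (Fin N) ℂ) + M) (σ i) (τ i) := by
        refine congrArg _ (Finset.sum_congr rfl fun σ _ =>
          Finset.sum_congr rfl fun τ _ => congrArg _ ?_)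
        rw [MeasureTheory.integral_fintype_prod_volume_eq_prod (ι := Fin N)
          (fun i t => (1 + g t) * ((φ (σ i) t * φ (τ i) t : ℝ) : ℂ))]
        exact Finset.prod_congr rfl fun i _ => hB (σ i) (τ i)
    _ = ((N.factorial : ℂ))⁻¹ * ((N.factorial : ℂ) *
          ((1 : Matrix (Fin N) (Fin N) ℂ) + M).det) := by
        rw [sum_perm_sign_mul_prod_eq_det N ((1 : Matrix (Fin N) (Fin N) ℂ) + M)]
    _ = ((1 : Matrix (Fin N) (Fin N) ℂ) + M).det := by
        rw [← mul_assoc, inv_mul_cancel₀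
          (by exact_mod_cast Nat.factorial_ne_zero N), one_mul]

end
end
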